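/- arXiv:2407.10158 — 2 statements merged into one kernel-verified Lean document; each statement's English description precedes it below -/
import Mathlib

section
/- Let m, n be positive integers and F_0 a compactly supported finite ℝ^m-valued Borel measure on ℝ^n. Then F_0(ℝ^n) = 0 if and only if there exists a compactly supported finite ℝ^{m×n}-valued Borel measure F_1 with ∂F_1 = F_0. -/
open MeasureTheory

noncomputable section

/-- `ℝ^n` with the Euclidean norm. -/
abbrev Euc (n : ℕ) := EuclideanSpace ℝ (Fin n)

/-- `h` is a norm on `ℝ^m`. -/
def IsNorm {m : ℕ} (h : (Fin m → ℝ) → ℝ) : Prop :=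
  (∀ x y, h (x + y) ≤ h x + h y) ∧ (∀ (c : ℝ) (x), h (c • x) = |c| * h x) ∧
    ∀ x, h x = 0 → x = 0

/-- The dual norm `h_*` of `h`: `h_*(g) = sup { g·θ : h θ ≤ 1 }`. -/
def dualNorm {m : ℕ} (h : (Fin m → ℝ) → ℝ) (g : Fin m → ℝ) : ℝ :=
  sSup {r | ∃ θ : Fin m → ℝ, h θ ≤ 1 ∧ r = ∑ i, g i * θ i}

/-- Matrix-vector product `M u`. -/
def matVec {m n : ℕ} (M : Fin m → Fin n → ℝ) (u : Euc n) : Fin m → ℝ :=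
  fun i => ∑ j, M i j * u j

/-- Frobenius inner product `M : N`. -/
def frob {m n : ℕ} (M N : Fin m → Fin n → ℝ) : ℝ := ∑ i, ∑ j, M i j * N i j

/-- `M ∈ ∂H(0)`, i.e. `h_*(M u) ≤ 1` for all `|u| ≤ 1`. -/
def inSubdiffH {m n : ℕ} (h : (Fin m → ℝ) → ℝ) (M : Fin m → Fin n → ℝ) : Prop :=
  ∀ u : Euc n, ‖u‖ ≤ 1 → dualNorm h (matVec M u) ≤ 1

/-- The norm `H` on `ℝ^{m×n}` generated by `h`:
`H(N) = sup { M:N : M ∈ ∂H(0) }`. -/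
def genNorm {m n : ℕ} (h : (Fin m → ℝ) → ℝ) (N : Fin m → Fin n → ℝ) : ℝ :=
  sSup {r | ∃ M : Fin m → Fin n → ℝ, inSubdiffH h M ∧ r = frob M N}

/-- The rank-one matrix `θ ⊗ e`. -/
def outer {m n : ℕ} (θ : Fin m → ℝ) (e : Euc n) : Fin m → Fin n → ℝ :=
  fun i j => θ i * e j

/-- An `ℝ^{m×n}`-valued Borel measure on `ℝ^n`, given by its component signed measures. -/
abbrev MatMeas (m n : ℕ) := Fin m → Fin n → MeasureTheory.SignedMeasure (Euc n)

/-- An `ℝ^m`-valued Borel measure on `ℝ^n`, given by its component signed measures. -/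
abbrev VecMeas (m n : ℕ) := Fin m → MeasureTheory.SignedMeasure (Euc n)

/-- Integral of a function against a signed measure (via the Jordan decomposition). -/
def sInt {n : ℕ} (ν : MeasureTheory.SignedMeasure (Euc n)) (f : Euc n → ℝ) : ℝ :=
  ∫ x, f x ∂ν.toJordanDecomposition.posPart - ∫ x, f x ∂ν.toJordanDecomposition.negPart

/-- The total variation `|F|_H` of `F` with respect to the norm `H` generated by `h`:
the supremum of `Σ_k H(F(B_k))` over countable Borel partitions `(B_k)` of `ℝ^n`. -/
def tvH {m n : ℕ} (h : (Fin m → ℝ) → ℝ) (F : MatMeas m n) : ℝ :=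
  sSup {r | ∃ B : ℕ → Set (Euc n), (∀ k, MeasurableSet (B k)) ∧
    Pairwise (Function.onFun Disjoint B) ∧ (⋃ k, B k) = Set.univ ∧
    r = ∑' k, genNorm h (fun i j => F i j (B k))}

/-- `F` is supported in `K`: it vanishes on Borel sets disjoint from `K`. -/
def suppIn {m n : ℕ} (F : MatMeas m n) (K : Set (Euc n)) : Prop :=
  ∀ B : Set (Euc n), MeasurableSet B → Disjoint B K → ∀ i j, F i j B = 0

/-- `F` is compactly supported. -/
def suppInCpt {m n : ℕ} (F : MatMeas m n) : Prop :=
  ∃ K : Set (Euc n), IsCompact K ∧ suppIn F K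

/-- `F₀` is compactly supported. -/
def vSuppInCpt {m n : ℕ} (F0 : VecMeas m n) : Prop :=
  ∃ K : Set (Euc n), IsCompact K ∧
    ∀ B : Set (Euc n), MeasurableSet B → Disjoint B K → ∀ i, F0 i B = 0

/-- The Jacobian matrix `Dψ(x) ∈ ℝ^{m×n}` of `ψ : ℝ^n → ℝ^m`. -/
def jac {m n : ℕ} (ψ : Euc n → (Fin m → ℝ)) (x : Euc n) : Fin m → Fin n → ℝ :=
  fun i j => fderiv ℝ ψ x (EuclideanSpace.single j 1) i

/-- `∂F = F₀`, i.e. `∫ Dψ : dF = ∫ ψ · dF₀` for all smooth compactly supported `ψ`. -/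
def isBoundary {m n : ℕ} (F : MatMeas m n) (F0 : VecMeas m n) : Prop :=
  ∀ ψ : Euc n → (Fin m → ℝ), ContDiff ℝ (⊤ : ℕ∞) ψ → HasCompactSupport ψ →
    (∑ i, ∑ j, sInt (F i j) fun x => jac ψ x i j) = ∑ i, sInt (F0 i) fun x => ψ x i

/-- `φ` is an admissible dual potential: `h_*(φ(y) - φ(x)) ≤ |y - x|`. -/
def admissible {m n : ℕ} (h : (Fin m → ℝ) → ℝ) (φ : Euc n → Fin m → ℝ) : Prop :=
  ∀ x y : Euc n, dualNorm h (φ y - φ x) ≤ ‖y - x‖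

/-- The dual objective `∫ φ · dF₀`. -/
def intDual {m n : ℕ} (F0 : VecMeas m n) (φ : Euc n → Fin m → ℝ) : ℝ :=
  ∑ i, sInt (F0 i) fun x => φ x i

/-! ### Auxiliary lemmas -/

lemma coordAbs_le_norm {n : ℕ} (x : Euc n) (j : Fin n) : |x j| ≤ ‖x‖ := by
  have h := abs_real_inner_le_norm (EuclideanSpace.single j (1:ℝ)) x
  rw [EuclideanSpace.inner_single_left, EuclideanSpace.norm_single] at h
  simpa using h

lemma integrable_of_bdd {α : Type*} [MeasurableSpace α] {μ : Measure α}
    [IsFiniteMeasure μ] {f : α → ℝ}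
    (hsm : AEStronglyMeasurable f μ) {C : ℝ} (hC : ∀ᵐ x ∂μ, |f x| ≤ C) :
    Integrable f μ :=
  Integrable.mono' (integrable_const C) hsm (by simpa [Real.norm_eq_abs] using hC)

lemma jordanNull {α : Type*} [MeasurableSpace α] (ν : SignedMeasure α) {K : Set α}
    (hK : MeasurableSet K) (h : ∀ B : Set α, MeasurableSet B → Disjoint B K → ν B = 0) :
    ν.toJordanDecomposition.posPart Kᶜ = 0 ∧ ν.toJordanDecomposition.negPart Kᶜ = 0 := by
  obtain ⟨i, hi₁, hi₂, hi₃, hp, hq⟩ := ν.toJordanDecomposition_spec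
  constructor
  · rw [hp, MeasureTheory.SignedMeasure.toMeasureOfZeroLE_apply _ hi₂ hi₁ hK.compl]
    have h0 : ν (i ∩ Kᶜ) = 0 :=
      h _ (hi₁.inter hK.compl) (disjoint_compl_left.mono_left Set.inter_subset_right)
    simp [h0]
  · rw [hq, MeasureTheory.SignedMeasure.toMeasureOfLEZero_apply _ hi₃ hi₁.compl hK.compl]
    have h0 : ν (iᶜ ∩ Kᶜ) = 0 :=
      h _ (hi₁.compl.inter hK.compl) (disjoint_compl_left.mono_left Set.inter_subset_right)
    simp [h0]

lemma signedApply {α : Type*} [MeasurableSpace α] (ν : SignedMeasure α) {B : Set α}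
    (hB : MeasurableSet B) :
    ν B = (ν.toJordanDecomposition.posPart B).toReal -
      (ν.toJordanDecomposition.negPart B).toReal := by
  conv_lhs => rw [← ν.toSignedMeasure_toJordanDecomposition]
  rw [MeasureTheory.JordanDecomposition.toSignedMeasure, VectorMeasure.sub_apply,
    Measure.toSignedMeasure_apply_measurable hB, Measure.toSignedMeasure_apply_measurable hB]
  rfl

lemma sInt_toSM_sub {n : ℕ} (μ ν : Measure (Euc n)) [IsFiniteMeasure μ] [IsFiniteMeasure ν]
    {f : Euc n → ℝ} (hf : Continuous f) {C : ℝ} (hC : ∀ x, |f x| ≤ C) :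
    sInt (μ.toSignedMeasure - ν.toSignedMeasure) f = ∫ x, f x ∂μ - ∫ x, f x ∂ν := by
  set s := μ.toSignedMeasure - ν.toSignedMeasure with hs
  set p := s.toJordanDecomposition.posPart with hpdef
  set q := s.toJordanDecomposition.negPart with hqdef
  have key : p + ν = q + μ := by
    ext B hB
    have h1 := signedApply s hB
    have h2 : s B = (μ B).toReal - (ν B).toReal := by
      rw [hs, VectorMeasure.sub_apply, Measure.toSignedMeasure_apply_measurable hB,
        Measure.toSignedMeasure_apply_measurable hB]
      rfl
    simp only [Measure.add_apply]
    rw [← ENNReal.toReal_eq_toReal_iff'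
      (ENNReal.add_ne_top.2 ⟨measure_ne_top _ _, measure_ne_top _ _⟩)
      (ENNReal.add_ne_top.2 ⟨measure_ne_top _ _, measure_ne_top _ _⟩),
      ENNReal.toReal_add (measure_ne_top _ _) (measure_ne_top _ _),
      ENNReal.toReal_add (measure_ne_top _ _) (measure_ne_top _ _)]
    rw [← hpdef, ← hqdef] at h1
    linarith
  have hi : ∀ (ρ : Measure (Euc n)) [IsFiniteMeasure ρ], Integrable f ρ := by
    intro ρ hρ
    exact integrable_of_bdd hf.aestronglyMeasurable (ae_of_all _ hC)
  have h4 : ∫ x, f x ∂(p + ν) = ∫ x, f x ∂(q + μ) := by rw [key]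
  rw [integral_add_measure (hi p) (hi ν), integral_add_measure (hi q) (hi μ)] at h4
  have h5 : sInt s f = ∫ x, f x ∂p - ∫ x, f x ∂q := rfl
  rw [h5]
  linarith

lemma fderiv_apply_sum {m n : ℕ} (ψ : Euc n → Fin m → ℝ) (y x : Euc n) (i : Fin m) :
    fderiv ℝ ψ y x i = ∑ j, x j * jac ψ y i j := by
  have hx : x = ∑ j, x j • EuclideanSpace.single j (1:ℝ) := by
    have h := (EuclideanSpace.basisFun (Fin n) ℝ).sum_repr x
    simp only [EuclideanSpace.basisFun_apply] at h
    exact h.symm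
  conv_lhs => rw [hx, map_sum]
  rw [Finset.sum_apply]
  refine Finset.sum_congr rfl fun j _ => ?_
  rw [(fderiv ℝ ψ y).map_smul]
  simp [jac]

lemma cont_jac {m n : ℕ} {ψ : Euc n → Fin m → ℝ} (hψ : ContDiff ℝ (⊤ : ℕ∞) ψ)
    (i : Fin m) (j : Fin n) : Continuous fun x => jac ψ x i j := by
  have h1 : Continuous fun x => fderiv ℝ ψ x := hψ.continuous_fderiv (by simp)
  exact (continuous_apply i).comp (h1.clm_apply continuous_const)

lemma hcs_jac {m n : ℕ} {ψ : Euc n → Fin m → ℝ} (hψ : HasCompactSupport ψ)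
    (i : Fin m) (j : Fin n) : HasCompactSupport fun x => jac ψ x i j := by
  have h1 : HasCompactSupport (fderiv ℝ ψ) := hψ.fderiv (𝕜 := ℝ)
  exact h1.comp_left (g := fun L : Euc n →L[ℝ] (Fin m → ℝ) =>
    L (EuclideanSpace.single j (1:ℝ)) i) (by simp)

lemma ftc_line {m n : ℕ} {ψ : Euc n → Fin m → ℝ} (hψ : ContDiff ℝ (⊤ : ℕ∞) ψ)
    (x : Euc n) (i : Fin m) :
    ∫ t in Set.Icc (0:ℝ) 1, fderiv ℝ ψ (t • x) x i = ψ x i - ψ 0 i := by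
  have hd : ∀ t : ℝ, HasDerivAt (fun t : ℝ => ψ (t • x) i) (fderiv ℝ ψ (t • x) x i) t := by
    intro t
    have h1 : HasDerivAt (fun t : ℝ => t • x) x t := by
      simpa using (hasDerivAt_id t).smul_const x
    have h2 : HasFDerivAt ψ (fderiv ℝ ψ (t • x)) (t • x) :=
      (hψ.differentiable (by simp) (t • x)).hasFDerivAt
    have h3 := h2.comp_hasDerivAt t h1
    exact (ContinuousLinearMap.proj i : (Fin m → ℝ) →L[ℝ] ℝ).hasFDerivAt.comp_hasDerivAt t h3
  have hcont : Continuous fun t : ℝ => fderiv ℝ ψ (t • x) x i := by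
    have h1 : Continuous fun y : Euc n => fderiv ℝ ψ y := hψ.continuous_fderiv (by simp)
    have h2 : Continuous fun t : ℝ => fderiv ℝ ψ (t • x) :=
      h1.comp (continuous_id.smul continuous_const)
    exact (continuous_apply i).comp (h2.clm_apply continuous_const)
  rw [MeasureTheory.integral_Icc_eq_integral_Ioc, ← intervalIntegral.integral_of_le zero_le_one]
  have := intervalIntegral.integral_eq_sub_of_hasDerivAt (f := fun t : ℝ => ψ (t • x) i)
    (fun t _ => hd t) (hcont.intervalIntegrable 0 1)
  simpa using this

/-- Measure with capped density: always finite. -/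
def capDensity {α : Type*} [MeasurableSpace α] (μ : Measure α) (v : α → NNReal) (C : NNReal) :
    Measure α :=
  μ.withDensity fun x => ((min (v x) C : NNReal) : ENNReal)

instance capDensity_finite {α : Type*} [MeasurableSpace α] (μ : Measure α) [IsFiniteMeasure μ]
    (v : α → NNReal) (C : NNReal) : IsFiniteMeasure (capDensity μ v C) := by
  constructor
  rw [capDensity, withDensity_apply _ MeasurableSet.univ, setLIntegral_univ]
  calc ∫⁻ x, ((min (v x) C : NNReal) : ENNReal) ∂μ ≤ ∫⁻ _, (C : ENNReal) ∂μ :=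
        lintegral_mono fun x => ENNReal.coe_le_coe.2 (min_le_right _ _)
    _ = C * μ Set.univ := lintegral_const _
    _ < ⊤ := ENNReal.mul_lt_top ENNReal.coe_lt_top (measure_lt_top μ _)

lemma capDensity_null {α : Type*} [MeasurableSpace α] (μ : Measure α) (v : α → NNReal) (C : NNReal)
    {B : Set α} (hB : MeasurableSet B) (h0 : μ B = 0) : capDensity μ v C B = 0 := by
  rw [capDensity, withDensity_apply _ hB]
  exact setLIntegral_measure_zero _ _ h0

/-! ### Helpers for the cone construction -/

lemma cont_coord {n : ℕ} (j : Fin n) : Continuous fun x : Euc n => x j :=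
  (EuclideanSpace.proj j : Euc n →L[ℝ] ℝ).continuous

instance lamFinite : IsFiniteMeasure (volume.restrict (Set.Icc (0:ℝ) 1)) := by
  constructor
  rw [Measure.restrict_apply_univ]
  simp [Real.volume_Icc]

/-- The cone (homothety) construction: push forward `Leb⌊[0,1] ⊗ (s·x_j)₊ μ` under
`(t, x) ↦ t • x`. -/
def coneMeas {n : ℕ} (μ : Measure (Euc n)) (j : Fin n) (s : ℝ) (C : NNReal) :
    Measure (Euc n) :=
  Measure.map (fun z : ℝ × Euc n => z.1 • z.2)
    ((volume.restrict (Set.Icc (0:ℝ) 1)).prod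
      (capDensity μ (fun x => Real.toNNReal (s * x j)) C))

instance coneMeas_finite {n : ℕ} (μ : Measure (Euc n)) [IsFiniteMeasure μ] (j : Fin n)
    (s : ℝ) (C : NNReal) : IsFiniteMeasure (coneMeas μ j s C) :=
  Measure.isFiniteMeasure_map _ _

lemma coneMeas_null {n : ℕ} (μ : Measure (Euc n)) [IsFiniteMeasure μ] {K : Set (Euc n)}
    (hK : MeasurableSet K) (hμK : μ Kᶜ = 0) {R : ℝ}
    (hKR : K ⊆ Metric.closedBall 0 R) (j : Fin n) (s : ℝ) (C : NNReal)
    {B : Set (Euc n)} (hB : MeasurableSet B) (hd : Disjoint B (Metric.closedBall 0 R)) :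
    coneMeas μ j s C B = 0 := by
  have hΦm : Measurable fun z : ℝ × Euc n => z.1 • z.2 :=
    (continuous_fst.smul continuous_snd).measurable
  rw [coneMeas, Measure.map_apply hΦm hB]
  have hsub : (fun z : ℝ × Euc n => z.1 • z.2) ⁻¹' B ⊆ (Set.Icc (0:ℝ) 1 ×ˢ K)ᶜ := by
    intro z hz hzK
    have h1 : ‖z.1 • z.2‖ ≤ R := by
      rw [norm_smul]
      have h2 : |z.1| ≤ 1 := by
        rw [abs_le]; exact ⟨by linarith [hzK.1.1], hzK.1.2⟩
      have h3 : ‖z.2‖ ≤ R := mem_closedBall_zero_iff.1 (hKR hzK.2)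
      calc ‖z.1‖ * ‖z.2‖ ≤ 1 * R :=
            mul_le_mul h2 h3 (norm_nonneg _) zero_le_one
        _ = R := one_mul R
    exact Set.disjoint_left.1 hd hz (mem_closedBall_zero_iff.2 h1)
  refine measure_mono_null hsub ?_
  rw [Set.compl_prod_eq_union]
  refine measure_union_null ?_ ?_
  · rw [Measure.prod_prod]
    have : (volume.restrict (Set.Icc (0:ℝ) 1)) (Set.Icc (0:ℝ) 1)ᶜ = 0 := by
      rw [Measure.restrict_apply measurableSet_Icc.compl, Set.compl_inter_self,
        measure_empty]
    rw [this, zero_mul]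
  · rw [Measure.prod_prod, capDensity_null μ _ _ hK.compl hμK, mul_zero]

lemma sm_lineInt {n : ℕ} {g : Euc n → ℝ} (hg : Continuous g) :
    StronglyMeasurable fun x : Euc n => ∫ t in Set.Icc (0:ℝ) 1, g (t • x) := by
  have h : StronglyMeasurable fun z : ℝ × Euc n => g (z.1 • z.2) :=
    (hg.comp (continuous_fst.smul continuous_snd)).stronglyMeasurable
  exact h.integral_prod_left'

lemma bdd_lineInt {n : ℕ} {g : Euc n → ℝ} {D : ℝ} (hgD : ∀ x, |g x| ≤ D) (x : Euc n) :
    |∫ t in Set.Icc (0:ℝ) 1, g (t • x)| ≤ D := by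
  have h := norm_integral_le_of_norm_le_const (μ := volume.restrict (Set.Icc (0:ℝ) 1))
    (C := D) (f := fun t : ℝ => g (t • x))
    (ae_of_all _ fun t => by simpa [Real.norm_eq_abs] using hgD (t • x))
  simpa [Real.norm_eq_abs, Measure.restrict_apply_univ, Real.volume_Icc] using h

lemma integral_coneMeas {n : ℕ} (μ : Measure (Euc n)) [IsFiniteMeasure μ] (j : Fin n)
    (s : ℝ) (C : NNReal) {g : Euc n → ℝ} (hg : Continuous g) {D : ℝ}
    (hgD : ∀ x, |g x| ≤ D) :
    ∫ y, g y ∂(coneMeas μ j s C) =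
      ∫ x, (((min (Real.toNNReal (s * x j)) C : NNReal) : ℝ) *
        ∫ t in Set.Icc (0:ℝ) 1, g (t • x)) ∂μ := by
  have hΦc : Continuous fun z : ℝ × Euc n => z.1 • z.2 :=
    continuous_fst.smul continuous_snd
  have hv : Measurable fun x : Euc n => min (Real.toNNReal (s * x j)) C :=
    ((continuous_real_toNNReal.comp (continuous_const.mul (cont_coord j))).min
      continuous_const).measurable
  have hint : Integrable (fun z : ℝ × Euc n => g (z.1 • z.2))
      ((volume.restrict (Set.Icc (0:ℝ) 1)).prod
        (capDensity μ (fun x => Real.toNNReal (s * x j)) C)) :=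
    integrable_of_bdd (hg.comp hΦc).aestronglyMeasurable (ae_of_all _ fun z => hgD _)
  rw [coneMeas, integral_map hΦc.aemeasurable hg.aestronglyMeasurable,
    integral_prod_symm _ hint, capDensity, integral_withDensity_eq_integral_smul hv]
  simp only [NNReal.smul_def, smul_eq_mul]

lemma ae_mem_of_null_compl {α : Type*} [MeasurableSpace α] {μ : Measure α} {K : Set α}
    (hμK : μ Kᶜ = 0) : ∀ᵐ x ∂μ, x ∈ K := by
  rw [ae_iff]
  exact measure_mono_null (fun x hx => hx) hμK

lemma integrable_minmul_lineInt {n : ℕ} (μ : Measure (Euc n)) [IsFiniteMeasure μ]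
    {K : Set (Euc n)} (hμK : μ Kᶜ = 0) {R : ℝ} (hR0 : 0 ≤ R)
    (hKR : K ⊆ Metric.closedBall 0 R) (j : Fin n) (s : ℝ)
    {g : Euc n → ℝ} (hg : Continuous g) {D : ℝ} (hgD : ∀ x, |g x| ≤ D) :
    Integrable (fun x => ((min (Real.toNNReal (s * x j)) (Real.toNNReal R) : NNReal) : ℝ) *
      ∫ t in Set.Icc (0:ℝ) 1, g (t • x)) μ := by
  have hD0 : 0 ≤ D := (abs_nonneg _).trans (hgD 0)
  refine integrable_of_bdd (C := R * D)
    ((((continuous_real_toNNReal.comp (continuous_const.mul (cont_coord j))).min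
        continuous_const).subtype_val.aestronglyMeasurable).mul
      (sm_lineInt hg).aestronglyMeasurable) (ae_of_all _ fun x => ?_)
  rw [abs_mul]
  have h1 : |((min (Real.toNNReal (s * x j)) (Real.toNNReal R) : NNReal) : ℝ)| ≤ R := by
    rw [abs_of_nonneg (NNReal.coe_nonneg _)]
    calc ((min (Real.toNNReal (s * x j)) (Real.toNNReal R) : NNReal) : ℝ)
        ≤ ((Real.toNNReal R : NNReal) : ℝ) := by
          exact_mod_cast min_le_right _ _
      _ = R := by rw [Real.coe_toNNReal _ hR0]
  exact mul_le_mul h1 (bdd_lineInt hgD x) (abs_nonneg _) ((abs_nonneg _).trans h1)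

lemma integrable_coordmul_lineInt {n : ℕ} (μ : Measure (Euc n)) [IsFiniteMeasure μ]
    {K : Set (Euc n)} (hμK : μ Kᶜ = 0) {R : ℝ}
    (hKR : K ⊆ Metric.closedBall 0 R) (j : Fin n)
    {g : Euc n → ℝ} (hg : Continuous g) {D : ℝ} (hgD : ∀ x, |g x| ≤ D) :
    Integrable (fun x => x j * ∫ t in Set.Icc (0:ℝ) 1, g (t • x)) μ := by
  have hD0 : 0 ≤ D := (abs_nonneg _).trans (hgD 0)
  refine integrable_of_bdd (C := R * D)
    (((cont_coord j).aestronglyMeasurable).mul (sm_lineInt hg).aestronglyMeasurable) ?_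
  filter_upwards [ae_mem_of_null_compl hμK] with x hx
  have h1 : |x j| ≤ R := (coordAbs_le_norm x j).trans (mem_closedBall_zero_iff.1 (hKR hx))
  rw [abs_mul]
  exact mul_le_mul h1 (bdd_lineInt hgD x) (abs_nonneg _) ((abs_nonneg _).trans h1)

lemma integral_coneMeas_sub {n : ℕ} (μ : Measure (Euc n)) [IsFiniteMeasure μ]
    {K : Set (Euc n)} (hμK : μ Kᶜ = 0) {R : ℝ} (hR0 : 0 ≤ R)
    (hKR : K ⊆ Metric.closedBall 0 R) (j : Fin n)
    {g : Euc n → ℝ} (hg : Continuous g) {D : ℝ} (hgD : ∀ x, |g x| ≤ D) :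
    (∫ y, g y ∂(coneMeas μ j 1 (Real.toNNReal R))) -
      (∫ y, g y ∂(coneMeas μ j (-1) (Real.toNNReal R))) =
      ∫ x, (x j * ∫ t in Set.Icc (0:ℝ) 1, g (t • x)) ∂μ := by
  rw [integral_coneMeas μ j 1 _ hg hgD, integral_coneMeas μ j (-1) _ hg hgD,
    ← integral_sub (integrable_minmul_lineInt μ hμK hR0 hKR j 1 hg hgD)
      (integrable_minmul_lineInt μ hμK hR0 hKR j (-1) hg hgD)]
  refine integral_congr_ae ?_
  filter_upwards [ae_mem_of_null_compl hμK] with x hx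
  have hxj : |x j| ≤ R := (coordAbs_le_norm x j).trans (mem_closedBall_zero_iff.1 (hKR hx))
  have h1 : min (Real.toNNReal (1 * x j)) (Real.toNNReal R) = Real.toNNReal (x j) := by
    rw [one_mul]
    exact min_eq_left ((Real.toNNReal_le_toNNReal_iff hR0).2 ((le_abs_self _).trans hxj))
  have h2 : min (Real.toNNReal ((-1) * x j)) (Real.toNNReal R) = Real.toNNReal (-(x j)) := by
    rw [neg_one_mul]
    exact min_eq_left ((Real.toNNReal_le_toNNReal_iff hR0).2 ((neg_le_abs _).trans hxj))
  rw [h1, h2, ← sub_mul]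
  congr 1
  rw [Real.coe_toNNReal', Real.coe_toNNReal']
  rcases le_total (x j) 0 with h | h
  · rw [max_eq_right h, max_eq_left (by linarith)]; ring
  · rw [max_eq_left h, max_eq_right (by linarith)]; ring

lemma line_integral_eq {m n : ℕ} {ψ : Euc n → Fin m → ℝ} (hψ : ContDiff ℝ (⊤ : ℕ∞) ψ)
    (i : Fin m) (x : Euc n) :
    ∑ j, x j * ∫ t in Set.Icc (0:ℝ) 1, jac ψ (t • x) i j = ψ x i - ψ 0 i := by
  have hc : ∀ j : Fin n, Continuous fun t : ℝ => jac ψ (t • x) i j := fun j =>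
    (cont_jac hψ i j).comp (continuous_id.smul continuous_const)
  calc ∑ j, x j * ∫ t in Set.Icc (0:ℝ) 1, jac ψ (t • x) i j
      = ∑ j, ∫ t in Set.Icc (0:ℝ) 1, x j * jac ψ (t • x) i j :=
        Finset.sum_congr rfl fun j _ => (integral_const_mul _ _).symm
    _ = ∫ t in Set.Icc (0:ℝ) 1, ∑ j, x j * jac ψ (t • x) i j :=
        (integral_finset_sum _ fun j _ =>
          (continuous_const.mul (hc j)).integrableOn_Icc).symm
    _ = ∫ t in Set.Icc (0:ℝ) 1, fderiv ℝ ψ (t • x) x i :=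
        integral_congr_ae (ae_of_all _ fun t => (fderiv_apply_sum ψ (t • x) x i).symm)
    _ = ψ x i - ψ 0 i := ftc_line hψ x i

/-- a compactly supported finite `ℝ^m`-valued measure `F₀` satisfies
`F₀(ℝ^n) = 0` if and only if there is a compactly supported finite `ℝ^{m×n}`-valued
measure `F₁` with `∂F₁ = F₀`. -/
theorem statement12 {m n : ℕ} (hm : 0 < m) (hn : 0 < n)
    (F0 : VecMeas m n) (hF0 : vSuppInCpt F0) :
    (∀ i, F0 i Set.univ = 0) ↔
      ∃ F1 : MatMeas m n, suppInCpt F1 ∧ isBoundary F1 F0 := by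
  obtain ⟨K, hKc, hKs⟩ := hF0
  have hKm : MeasurableSet K := hKc.isClosed.measurableSet
  constructor
  · intro h0
    obtain ⟨R, hR0, hKR⟩ : ∃ R : ℝ, 0 ≤ R ∧ K ⊆ Metric.closedBall 0 R := by
      obtain ⟨r, hr⟩ := hKc.isBounded.subset_closedBall 0
      exact ⟨max r 0, le_max_right _ _,
        hr.trans (Metric.closedBall_subset_closedBall (le_max_left _ _))⟩
    have hpK : ∀ i : Fin m, (F0 i).toJordanDecomposition.posPart Kᶜ = 0 := fun i =>
      (jordanNull (F0 i) hKm (fun B hB hd => hKs B hB hd i)).1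
    have hqK : ∀ i : Fin m, (F0 i).toJordanDecomposition.negPart Kᶜ = 0 := fun i =>
      (jordanNull (F0 i) hKm (fun B hB hd => hKs B hB hd i)).2
    refine ⟨fun i j =>
      (coneMeas ((F0 i).toJordanDecomposition.posPart) j 1 (Real.toNNReal R) +
        coneMeas ((F0 i).toJordanDecomposition.negPart) j (-1)
          (Real.toNNReal R)).toSignedMeasure -
      (coneMeas ((F0 i).toJordanDecomposition.posPart) j (-1) (Real.toNNReal R) +
        coneMeas ((F0 i).toJordanDecomposition.negPart) j 1
          (Real.toNNReal R)).toSignedMeasure,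
      ⟨Metric.closedBall 0 R, isCompact_closedBall 0 R, ?_⟩, ?_⟩
    · intro B hB hd i j
      rw [VectorMeasure.sub_apply, Measure.toSignedMeasure_apply_measurable hB,
        Measure.toSignedMeasure_apply_measurable hB, measureReal_def, measureReal_def,
        Measure.add_apply, Measure.add_apply,
        coneMeas_null _ hKm (hpK i) hKR j 1 _ hB hd,
        coneMeas_null _ hKm (hqK i) hKR j (-1) _ hB hd,
        coneMeas_null _ hKm (hpK i) hKR j (-1) _ hB hd,
        coneMeas_null _ hKm (hqK i) hKR j 1 _ hB hd]
      simp
    · intro ψ hψ hψc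
      have hstep : ∀ (i : Fin m) (j : Fin n),
          sInt ((coneMeas ((F0 i).toJordanDecomposition.posPart) j 1 (Real.toNNReal R) +
            coneMeas ((F0 i).toJordanDecomposition.negPart) j (-1)
              (Real.toNNReal R)).toSignedMeasure -
          (coneMeas ((F0 i).toJordanDecomposition.posPart) j (-1) (Real.toNNReal R) +
            coneMeas ((F0 i).toJordanDecomposition.negPart) j 1
              (Real.toNNReal R)).toSignedMeasure)
            (fun x => jac ψ x i j) =
          (∫ x, (x j * ∫ t in Set.Icc (0:ℝ) 1, jac ψ (t • x) i j)
              ∂((F0 i).toJordanDecomposition.posPart)) -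
          ∫ x, (x j * ∫ t in Set.Icc (0:ℝ) 1, jac ψ (t • x) i j)
              ∂((F0 i).toJordanDecomposition.negPart) := by
        intro i j
        obtain ⟨D, hD⟩ := (hcs_jac hψc i j).exists_bound_of_continuous (cont_jac hψ i j)
        have hD' : ∀ x, |jac ψ x i j| ≤ D := fun x => by
          simpa [Real.norm_eq_abs] using hD x
        have hI : ∀ (ρ : Measure (Euc n)) [IsFiniteMeasure ρ],
            Integrable (fun x => jac ψ x i j) ρ := by
          intro ρ hρ
          exact integrable_of_bdd (cont_jac hψ i j).aestronglyMeasurable (ae_of_all _ hD')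
        rw [sInt_toSM_sub _ _ (cont_jac hψ i j) hD',
          integral_add_measure (hI _) (hI _), integral_add_measure (hI _) (hI _)]
        have e1 := integral_coneMeas_sub ((F0 i).toJordanDecomposition.posPart)
          (hpK i) hR0 hKR j (cont_jac hψ i j) hD'
        have e2 := integral_coneMeas_sub ((F0 i).toJordanDecomposition.negPart)
          (hqK i) hR0 hKR j (cont_jac hψ i j) hD'
        linarith
      refine Finset.sum_congr rfl fun i _ => ?_
      rw [Finset.sum_congr rfl fun j _ => hstep i j, Finset.sum_sub_distrib]
      have hIj : ∀ (ρ : Measure (Euc n)) [IsFiniteMeasure ρ], ρ Kᶜ = 0 → ∀ j : Fin n,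
          Integrable (fun x => x j * ∫ t in Set.Icc (0:ℝ) 1, jac ψ (t • x) i j) ρ := by
        intro ρ hρ hρK j
        obtain ⟨D, hD⟩ := (hcs_jac hψc i j).exists_bound_of_continuous (cont_jac hψ i j)
        have hD' : ∀ x, |jac ψ x i j| ≤ D := fun x => by
          simpa [Real.norm_eq_abs] using hD x
        exact integrable_coordmul_lineInt ρ hρK hKR j (cont_jac hψ i j) hD'
      rw [← integral_finset_sum _ (fun j _ => hIj _ (hpK i) j),
        ← integral_finset_sum _ (fun j _ => hIj _ (hqK i) j),
        integral_congr_ae (ae_of_all _ fun x => line_integral_eq hψ i x),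
        integral_congr_ae (ae_of_all _ fun x => line_integral_eq hψ i x)]
      have hcψ : Continuous fun x => ψ x i := (continuous_apply i).comp hψ.continuous
      have hccψ : HasCompactSupport fun x => ψ x i :=
        hψc.comp_left (g := fun v : Fin m → ℝ => v i) rfl
      obtain ⟨E, hE⟩ := hccψ.exists_bound_of_continuous hcψ
      have hE' : ∀ x, |ψ x i| ≤ E := fun x => by simpa [Real.norm_eq_abs] using hE x
      have hIψ : ∀ (ρ : Measure (Euc n)) [IsFiniteMeasure ρ],
          Integrable (fun x => ψ x i) ρ := by
        intro ρ hρ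
        exact integrable_of_bdd hcψ.aestronglyMeasurable (ae_of_all _ hE')
      rw [integral_sub (hIψ _) (integrable_const _),
        integral_sub (hIψ _) (integrable_const _), integral_const, integral_const]
      have hPQ : (((F0 i).toJordanDecomposition.posPart) Set.univ).toReal =
          (((F0 i).toJordanDecomposition.negPart) Set.univ).toReal := by
        have h := signedApply (F0 i) MeasurableSet.univ
        rw [h0 i] at h
        linarith
      have hfin : sInt (F0 i) (fun x => ψ x i) =
          (∫ x, ψ x i ∂((F0 i).toJordanDecomposition.posPart)) -
            ∫ x, ψ x i ∂((F0 i).toJordanDecomposition.negPart) := rfl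
      rw [hfin, measureReal_def, measureReal_def, hPQ]
      ring
  · rintro ⟨F1, ⟨K1, hK1c, hK1s⟩, hbd⟩ i₀
    have hK1m : MeasurableSet K1 := hK1c.isClosed.measurableSet
    obtain ⟨R, hRK, hRK1, hR0⟩ : ∃ R : ℝ, K ⊆ Metric.closedBall 0 R ∧
        K1 ⊆ Metric.closedBall 0 R ∧ 0 ≤ R := by
      obtain ⟨r1, h1⟩ := hKc.isBounded.subset_closedBall 0
      obtain ⟨r2, h2⟩ := hK1c.isBounded.subset_closedBall 0
      exact ⟨max (max r1 r2) 0,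
        h1.trans (Metric.closedBall_subset_closedBall
          (le_max_of_le_left (le_max_left _ _))),
        h2.trans (Metric.closedBall_subset_closedBall
          (le_max_of_le_left (le_max_right _ _))), le_max_right _ _⟩
    set c : ContDiffBump (0 : Euc n) := ⟨R + 1, R + 2, by linarith, by linarith⟩ with hc
    set ψ : Euc n → Fin m → ℝ := fun x => (c x) • (Pi.single i₀ (1 : ℝ) : Fin m → ℝ) with hψdef
    have hψs : ContDiff ℝ (⊤ : ℕ∞) ψ := (c.contDiff).smul contDiff_const
    have hψc : HasCompactSupport ψ := c.hasCompactSupport.smul_right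
    have key := hbd ψ hψs hψc
    -- the Jacobian of ψ vanishes on the ball of radius R+1
    have hjac0 : ∀ x ∈ Metric.ball (0 : Euc n) (R + 1), ∀ i j, jac ψ x i j = 0 := by
      intro x hx i j
      have hev : ψ =ᶠ[nhds x] fun _ => Pi.single i₀ (1 : ℝ) := by
        filter_upwards [Metric.isOpen_ball.mem_nhds hx] with y hy
        have h1 : c y = 1 := c.one_of_mem_closedBall (Metric.ball_subset_closedBall hy)
        simp [hψdef, h1]
      have h2 : fderiv ℝ ψ x = fderiv ℝ (fun _ : Euc n => Pi.single i₀ (1 : ℝ)) x :=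
        hev.fderiv_eq
      simp [jac, h2]
    -- hence the left-hand side of the boundary identity vanishes
    have hL : ∀ i j, sInt (F1 i j) (fun x => jac ψ x i j) = 0 := by
      intro i j
      obtain ⟨hp0, hq0⟩ := jordanNull (F1 i j) hK1m (fun B hB hd => hK1s B hB hd i j)
      have hz : ∀ (ρ : Measure (Euc n)), ρ K1ᶜ = 0 →
          ∫ x, jac ψ x i j ∂ρ = 0 := by
        intro ρ hρ
        have hae : (fun x => jac ψ x i j) =ᵐ[ρ] fun _ => (0 : ℝ) := by
          rw [Filter.EventuallyEq, ae_iff]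
          refine measure_mono_null (fun x hx => ?_) hρ
          simp only [Set.mem_setOf_eq] at hx
          intro hxK1
          have hb : x ∈ Metric.ball (0 : Euc n) (R + 1) := by
            have h2 := mem_closedBall_zero_iff.1 (hRK1 hxK1)
            exact mem_ball_zero_iff.2 (by linarith)
          exact hx (hjac0 x hb i j)
        rw [integral_congr_ae hae, integral_const, smul_zero]
      rw [sInt]
      rw [hz _ hp0, hz _ hq0, sub_zero]
    -- the i₀-term of the right-hand side computes the total mass
    have hmain : sInt (F0 i₀) (fun x => ψ x i₀) = F0 i₀ Set.univ := by
      obtain ⟨hp0, hq0⟩ := jordanNull (F0 i₀) hKm (fun B hB hd => hKs B hB hd i₀)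
      have hone : ∀ (ρ : Measure (Euc n)), IsFiniteMeasure ρ → ρ Kᶜ = 0 →
          ∫ x, ψ x i₀ ∂ρ = (ρ Set.univ).toReal := by
        intro ρ hρ hρK
        haveI := hρ
        have hae : (fun x => ψ x i₀) =ᵐ[ρ] fun _ => (1 : ℝ) := by
          rw [Filter.EventuallyEq, ae_iff]
          refine measure_mono_null (fun x hx => ?_) hρK
          simp only [Set.mem_setOf_eq] at hx
          intro hxK
          refine hx ?_
          have h1 : c x = 1 := c.one_of_mem_closedBall
            (Metric.closedBall_subset_closedBall (by show R ≤ R + 1; linarith) (hRK hxK))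
          simp [hψdef, h1]
        rw [integral_congr_ae hae, integral_const, smul_eq_mul, mul_one]
        rfl
      rw [sInt, hone _ inferInstance hp0, hone _ inferInstance hq0,
        ← signedApply (F0 i₀) MeasurableSet.univ]
    -- conclude
    have hsum0 : (0 : ℝ) = ∑ i, sInt (F0 i) fun x => ψ x i := by
      rw [← key]
      refine (Finset.sum_eq_zero fun i _ => Finset.sum_eq_zero fun j _ => hL i j).symm
    have hR0' : ∀ i, i ≠ i₀ → sInt (F0 i) (fun x => ψ x i) = 0 := by
      intro i hi
      have h1 : (fun x => ψ x i) = fun _ => (0 : ℝ) := by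
        funext x
        simp [hψdef, Pi.single_eq_of_ne hi]
      rw [h1, sInt]
      simp
    rw [Finset.sum_eq_single i₀ (fun i _ hi => hR0' i hi)
      (fun h => absurd (Finset.mem_univ i₀) h)] at hsum0
    rw [← hmain, ← hsum0]
end
end

section
/- Let m = n = 2 and let h be the Euclidean norm on ℝ², with generated norm H on ℝ^{2×2}. Let k ≥ 3, let e_1, …, e_k ∈ S¹ ∩ [0,1]² be pairwise distinct unit vectors, let 1 ≤ j < k and a_1, …, a_j > 0, a_{j+1}, …, a_k < 0 with Σ_{i=1}^k a_i e_i = 0. Set θ_i = |a_i| e_i, pick lengths l_1, …, l_k > 0, and define x_i = l_i e_i for i ≤ j and x_i = −l_i e_i for i > j. Let F be the ℝ^{2×2}-valued measure F(B) = Σ_{i=1}^k ℋ¹(B ∩ s_i) (θ_i ⊗ e_i), where s_i = [0, x_i] for i ≤ j and s_i = [x_i, 0] for i > j, and let F_0 = Σ_{i=1}^j θ_i δ_{x_i} − Σ_{i=j+1}^k θ_i δ_{x_i}. Then ∂F = F_0, |F|_H = Σ_{i=1}^k |a_i| l_i, and F minimizes |·|_H among all compactly supported finite ℝ^{2×2}-valued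 Borel measures G with ∂G = F_0. -/
open MeasureTheory

noncomputable section

open scoped ENNReal

/-- The Euclidean norm on `ℝ²` as multi-material transport cost. -/
def hEuc : (Fin 2 → ℝ) → ℝ := fun θ => Real.sqrt (θ 0 ^ 2 + θ 1 ^ 2)

/-- The value of the Dirac measure `δ_p` on the set `B`. -/
def dirac01 {n : ℕ} (p : Euc n) (B : Set (Euc n)) : ℝ := Set.indicator B (fun _ => 1) p

namespace S13

lemma hEuc_nonneg (g : Fin 2 → ℝ) : 0 ≤ hEuc g := Real.sqrt_nonneg _

lemma hEuc_sq (g : Fin 2 → ℝ) : hEuc g ^ 2 = g 0 ^ 2 + g 1 ^ 2 :=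
  Real.sq_sqrt (by positivity)

lemma hEuc_zero : hEuc 0 = 0 := by simp [hEuc]

lemma hEuc_eq_norm (u : Euc 2) : hEuc (fun i => u i) = ‖u‖ := by
  rw [EuclideanSpace.norm_eq]
  simp [hEuc, Fin.sum_univ_two, Real.norm_eq_abs, sq_abs]

lemma inner2_le (g θ : Fin 2 → ℝ) : g 0 * θ 0 + g 1 * θ 1 ≤ hEuc g * hEuc θ := by
  have h1 := hEuc_nonneg g; have h2 := hEuc_nonneg θ
  have e1 := hEuc_sq g; have e2 := hEuc_sq θ
  nlinarith [sq_nonneg (g 0 * θ 1 - g 1 * θ 0), sq_nonneg (hEuc g * hEuc θ - (g 0 * θ 0 + g 1 * θ 1)), mul_nonneg h1 h2]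

lemma hEuc_smul (c : ℝ) (g : Fin 2 → ℝ) : hEuc (c • g) = |c| * hEuc g := by
  simp only [hEuc, Pi.smul_apply, smul_eq_mul, mul_pow]
  rw [← mul_add, Real.sqrt_mul (sq_nonneg c), Real.sqrt_sq_eq_abs]

lemma hEuc_eq_zero {g : Fin 2 → ℝ} (h : hEuc g = 0) : g = 0 := by
  have : g 0 ^ 2 + g 1 ^ 2 = 0 := by
    have := hEuc_sq g; rw [h] at this; linarith [this]
  have h0 : g 0 = 0 := by nlinarith [sq_nonneg (g 0), sq_nonneg (g 1)]
  have h1 : g 1 = 0 := by nlinarith [sq_nonneg (g 0), sq_nonneg (g 1)]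
  funext i; fin_cases i <;> simpa

lemma dualNorm_hEuc (g : Fin 2 → ℝ) : dualNorm hEuc g = hEuc g := by
  have hbdd : ∀ r ∈ {r | ∃ θ : Fin 2 → ℝ, hEuc θ ≤ 1 ∧ r = ∑ i, g i * θ i}, r ≤ hEuc g := by
    rintro r ⟨θ, hθ, rfl⟩
    rw [Fin.sum_univ_two]
    calc g 0 * θ 0 + g 1 * θ 1 ≤ hEuc g * hEuc θ := inner2_le g θ
      _ ≤ hEuc g * 1 := mul_le_mul_of_nonneg_left hθ (hEuc_nonneg g)
      _ = hEuc g := mul_one _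
  have hBdd : BddAbove {r | ∃ θ : Fin 2 → ℝ, hEuc θ ≤ 1 ∧ r = ∑ i, g i * θ i} := ⟨hEuc g, hbdd⟩
  refine le_antisymm (Real.sSup_le hbdd (hEuc_nonneg g)) ?_
  rcases eq_or_lt_of_le (hEuc_nonneg g) with h0 | hpos
  · rw [← h0]
    apply le_csSup hBdd
    exact ⟨0, by simp [hEuc_zero], by simp⟩
  · apply le_csSup hBdd
    refine ⟨(hEuc g)⁻¹ • g, ?_, ?_⟩
    · rw [hEuc_smul, abs_of_nonneg (inv_nonneg.2 (hEuc_nonneg g)), inv_mul_cancel₀ (ne_of_gt hpos)]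
    · rw [Fin.sum_univ_two]
      simp only [Pi.smul_apply, smul_eq_mul]
      have : g 0 * ((hEuc g)⁻¹ * g 0) + g 1 * ((hEuc g)⁻¹ * g 1) = (g 0 ^ 2 + g 1 ^ 2) * (hEuc g)⁻¹ := by ring
      rw [this, ← hEuc_sq, sq, mul_assoc, mul_inv_cancel₀ (ne_of_gt hpos), mul_one]

lemma abs_coord_le (w : Fin 2 → ℝ) (i : Fin 2) : |w i| ≤ hEuc w := by
  rw [← Real.sqrt_sq_eq_abs]
  apply Real.sqrt_le_sqrt
  fin_cases i
  · show w 0 ^ 2 ≤ w 0 ^ 2 + w 1 ^ 2; nlinarith [sq_nonneg (w 1)]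
  · show w 1 ^ 2 ≤ w 0 ^ 2 + w 1 ^ 2; nlinarith [sq_nonneg (w 0)]

lemma inSubdiffH_zero : inSubdiffH (m:=2) (n:=2) hEuc (fun _ _ => (0:ℝ)) := by
  intro u hu
  have h0 : matVec (m:=2) (fun _ _ => (0:ℝ)) u = (0 : Fin 2 → ℝ) := by funext i; simp [matVec]
  rw [dualNorm_hEuc, h0, hEuc_zero]; norm_num

lemma frob_zero (N : Fin 2 → Fin 2 → ℝ) : frob (fun _ _ => (0:ℝ)) N = 0 := by
  simp [frob]

lemma genNorm_set_nonempty (N : Fin 2 → Fin 2 → ℝ) :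
    (0:ℝ) ∈ {r | ∃ M : Fin 2 → Fin 2 → ℝ, inSubdiffH hEuc M ∧ r = frob M N} :=
  ⟨fun _ _ => 0, inSubdiffH_zero, (frob_zero N).symm⟩

lemma hEuc_matVec_le {M : Fin 2 → Fin 2 → ℝ} (hM : inSubdiffH hEuc M)
    {u : Euc 2} (hu : ‖u‖ ≤ 1) : hEuc (matVec M u) ≤ 1 := by
  have := hM u hu; rwa [dualNorm_hEuc] at this

lemma entry_abs_le {M : Fin 2 → Fin 2 → ℝ} (hM : inSubdiffH hEuc M) (i j : Fin 2) :
    |M i j| ≤ 1 := by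
  have h1 : ‖(EuclideanSpace.single j 1 : Euc 2)‖ ≤ 1 := by
    rw [EuclideanSpace.norm_single]; simp
  have h2 := hEuc_matVec_le hM h1
  have h3 : matVec M (EuclideanSpace.single j 1) i = M i j := by
    simp [matVec, EuclideanSpace.single_apply]
  calc |M i j| = |matVec M (EuclideanSpace.single j 1) i| := by rw [h3]
    _ ≤ hEuc (matVec M (EuclideanSpace.single j 1)) := abs_coord_le _ i
    _ ≤ 1 := h2

lemma frob_le_sum_abs {M : Fin 2 → Fin 2 → ℝ} (hM : inSubdiffH hEuc M)
    (N : Fin 2 → Fin 2 → ℝ) : frob M N ≤ ∑ i, ∑ j, |N i j| := by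
  apply Finset.sum_le_sum; intro i _
  apply Finset.sum_le_sum; intro j _
  calc M i j * N i j ≤ |M i j * N i j| := le_abs_self _
    _ = |M i j| * |N i j| := abs_mul _ _
    _ ≤ 1 * |N i j| := mul_le_mul_of_nonneg_right (entry_abs_le hM i j) (abs_nonneg _)
    _ = |N i j| := one_mul _

lemma genNorm_bddAbove (N : Fin 2 → Fin 2 → ℝ) :
    BddAbove {r | ∃ M : Fin 2 → Fin 2 → ℝ, inSubdiffH hEuc M ∧ r = frob M N} := by
  refine ⟨∑ i, ∑ j, |N i j|, ?_⟩
  rintro r ⟨M, hM, rfl⟩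
  exact frob_le_sum_abs hM N

lemma genNorm_nonneg (N : Fin 2 → Fin 2 → ℝ) : 0 ≤ genNorm hEuc N :=
  le_csSup (genNorm_bddAbove N) (genNorm_set_nonempty N)

lemma genNorm_le {N : Fin 2 → Fin 2 → ℝ} {c : ℝ}
    (h : ∀ M : Fin 2 → Fin 2 → ℝ, inSubdiffH hEuc M → frob M N ≤ c) :
    genNorm hEuc N ≤ c := by
  apply Real.sSup_le
  · rintro r ⟨M, hM, rfl⟩; exact h M hM
  · have := h _ inSubdiffH_zero; rwa [frob_zero N] at this

lemma ge_genNorm {N M : Fin 2 → Fin 2 → ℝ} (hM : inSubdiffH hEuc M) :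
    frob M N ≤ genNorm hEuc N :=
  le_csSup (genNorm_bddAbove N) ⟨M, hM, rfl⟩

lemma genNorm_le_sum_abs (N : Fin 2 → Fin 2 → ℝ) :
    genNorm hEuc N ≤ ∑ i, ∑ j, |N i j| :=
  genNorm_le fun _ hM => frob_le_sum_abs hM N

lemma frob_outer (M : Fin 2 → Fin 2 → ℝ) (θ : Fin 2 → ℝ) (e : Euc 2) :
    frob M (outer θ e) = ∑ i, θ i * matVec M e i := by
  simp only [frob, outer, matVec]
  rw [Fin.sum_univ_two, Fin.sum_univ_two]
  simp only [matVec, Fin.sum_univ_two]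
  ring

lemma frob_outer_le {M : Fin 2 → Fin 2 → ℝ} (hM : inSubdiffH hEuc M)
    (θ : Fin 2 → ℝ) (e : Euc 2) (he : ‖e‖ ≤ 1) :
    frob M (outer θ e) ≤ hEuc θ := by
  rw [frob_outer, Fin.sum_univ_two]
  calc θ 0 * matVec M e 0 + θ 1 * matVec M e 1 ≤ hEuc θ * hEuc (matVec M e) := inner2_le θ _
    _ ≤ hEuc θ * 1 := mul_le_mul_of_nonneg_left (hEuc_matVec_le hM he) (hEuc_nonneg θ)
    _ = hEuc θ := mul_one _

lemma genNorm_comb_le {k : ℕ} (c : Fin k → ℝ) (hc : ∀ i, 0 ≤ c i)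
    (θf : Fin k → Fin 2 → ℝ) (ef : Fin k → Euc 2) (he : ∀ i, ‖ef i‖ ≤ 1) :
    genNorm hEuc (fun i' j' => ∑ i, c i * (θf i i' * ef i j')) ≤ ∑ i, c i * hEuc (θf i) := by
  apply genNorm_le
  intro M hM
  have h1 : ∀ i' j' : Fin 2, M i' j' * (∑ i, c i * (θf i i' * ef i j')) = ∑ i, c i * (M i' j' * (θf i i' * ef i j')) := by
    intro i' j'; rw [Finset.mul_sum]; congr 1; funext i; ring
  have key : frob M (fun i' j' => ∑ i, c i * (θf i i' * ef i j')) = ∑ i, c i * frob M (outer (θf i) (ef i)) := by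
    show (∑ i', ∑ j', M i' j' * (∑ i, c i * (θf i i' * ef i j'))) = _
    calc (∑ i', ∑ j', M i' j' * (∑ i, c i * (θf i i' * ef i j')))
        = ∑ i', ∑ j', ∑ i, c i * (M i' j' * (θf i i' * ef i j')) := by simp only [h1]
      _ = ∑ i', ∑ i, ∑ j', c i * (M i' j' * (θf i i' * ef i j')) :=
          Finset.sum_congr rfl (fun i' _ => Finset.sum_comm)
      _ = ∑ i, ∑ i', ∑ j', c i * (M i' j' * (θf i i' * ef i j')) := Finset.sum_comm
      _ = ∑ i, c i * frob M (outer (θf i) (ef i)) := by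
          simp only [frob, outer, Finset.mul_sum]
  rw [key]
  apply Finset.sum_le_sum
  intro i _
  exact mul_le_mul_of_nonneg_left (frob_outer_le hM (θf i) (ef i) (he i)) (hc i)

lemma hEuc_unit {e : Euc 2} (he : ‖e‖ = 1) : e 0 ^ 2 + e 1 ^ 2 = 1 := by
  have h := hEuc_eq_norm e
  have := hEuc_sq (fun i => e i)
  rw [h, he] at this
  simpa using this.symm

lemma genNorm_outer (θ : Fin 2 → ℝ) (e : Euc 2) (he : ‖e‖ = 1) :
    genNorm hEuc (outer θ e) = hEuc θ := by
  refine le_antisymm ?_ ?_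
  · apply genNorm_le; intro M hM; exact frob_outer_le hM θ e he.le
  · rcases eq_or_lt_of_le (hEuc_nonneg θ) with h0 | hpos
    · rw [← h0]; exact genNorm_nonneg _
    · have hne := ne_of_gt hpos
      set M : Fin 2 → Fin 2 → ℝ := fun i j => θ i * e j / hEuc θ with hMdef
      have hM : inSubdiffH (m:=2) (n:=2) hEuc M := by
        intro u hu
        have hv : matVec M u = ((∑ j, e j * u j) / hEuc θ) • θ := by
          funext i; simp only [matVec, hMdef, Pi.smul_apply, smul_eq_mul, Finset.sum_div, Finset.mul_sum]
          rw [Fin.sum_univ_two, Fin.sum_univ_two]; ring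
        rw [dualNorm_hEuc, hv, hEuc_smul, abs_div, abs_of_nonneg (hEuc_nonneg θ)]
        rw [div_mul_eq_mul_div, mul_div_assoc, div_self hne, mul_one]
        have h1 : (∑ j, e j * u j) ≤ hEuc (fun i => e i) * hEuc (fun i => u i) := by
          rw [Fin.sum_univ_two]; exact inner2_le _ _
        have h2 : -(∑ j, e j * u j) ≤ hEuc (fun i => e i) * hEuc (fun i => u i) := by
          rw [Fin.sum_univ_two]
          have := inner2_le (fun i => -e i) (fun i => u i)
          have hne2 : hEuc (fun i => -e i) = hEuc (fun i => e i) := by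
            have : (fun i : Fin 2 => -e i) = (-1 : ℝ) • (fun i => e i) := by funext i; simp
            rw [this, hEuc_smul]; norm_num
          simp only [hne2] at this
          convert this using 1; ring
        rw [abs_le]
        constructor
        · rw [hEuc_eq_norm, hEuc_eq_norm, he, one_mul] at h2
          nlinarith [norm_nonneg u]
        · rw [hEuc_eq_norm, hEuc_eq_norm, he, one_mul] at h1
          nlinarith [norm_nonneg u]
      have hfr : frob M (outer θ e) = hEuc θ := by
        simp only [frob, outer, hMdef, Fin.sum_univ_two]
        have hu := hEuc_unit he
        have hsq := hEuc_sq θ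
        field_simp
        nlinarith [hsq, hu]
      rw [← hfr]
      exact ge_genNorm hM



lemma jordan_apply (ν : SignedMeasure (Euc 2)) {B : Set (Euc 2)} (hB : MeasurableSet B) :
    ν B = (ν.toJordanDecomposition.posPart B).toReal - (ν.toJordanDecomposition.negPart B).toReal := by
  conv_lhs => rw [← ν.toSignedMeasure_toJordanDecomposition]
  rw [JordanDecomposition.toSignedMeasure]
  simp [VectorMeasure.sub_apply, Measure.toSignedMeasure_apply, hB]
  rfl

lemma sInt_eq (ν : SignedMeasure (Euc 2)) (μ₁ μ₂ : Measure (Euc 2))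
    [IsFiniteMeasure μ₁] [IsFiniteMeasure μ₂]
    (hv : ∀ B, MeasurableSet B → ν B = (μ₁ B).toReal - (μ₂ B).toReal)
    (f : Euc 2 → ℝ) (hf : Continuous f) (hfc : HasCompactSupport f) :
    sInt ν f = ∫ x, f x ∂μ₁ - ∫ x, f x ∂μ₂ := by
  set p := ν.toJordanDecomposition.posPart with hp
  set n := ν.toJordanDecomposition.negPart with hn
  have hmeq : μ₁ + n = μ₂ + p := by
    ext B hB
    have h1 := hv B hB
    have h2 := jordan_apply ν hB
    rw [Measure.add_apply, Measure.add_apply]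
    rw [← ENNReal.toReal_eq_toReal_iff' (by finiteness) (by finiteness)]
    rw [ENNReal.toReal_add (measure_ne_top _ _) (measure_ne_top _ _),
      ENNReal.toReal_add (measure_ne_top _ _) (measure_ne_top _ _)]
    rw [← hp, ← hn] at h2
    linarith
  have i1 : Integrable f μ₁ := hf.integrable_of_hasCompactSupport hfc
  have i2 : Integrable f μ₂ := hf.integrable_of_hasCompactSupport hfc
  have iP : Integrable f p := hf.integrable_of_hasCompactSupport hfc
  have iN : Integrable f n := hf.integrable_of_hasCompactSupport hfc
  have key : ∫ x, f x ∂μ₁ + ∫ x, f x ∂n = ∫ x, f x ∂μ₂ + ∫ x, f x ∂p := by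
    rw [← integral_add_measure i1 iN, ← integral_add_measure i2 iP, hmeq]
  show ∫ x, f x ∂p - ∫ x, f x ∂n = _
  linarith

lemma max_sub_max_neg (c : ℝ) : max c 0 - max (-c) 0 = c := by
  rcases le_total c 0 with h | h
  · rw [max_eq_right h, max_eq_left (by linarith)]; ring
  · rw [max_eq_left h, max_eq_right (by linarith)]; ring

lemma sInt_comb {k : ℕ} (ν : SignedMeasure (Euc 2)) (c : Fin k → ℝ)
    (μs : Fin k → Measure (Euc 2)) (hfin : ∀ i, IsFiniteMeasure (μs i))
    (hv : ∀ B, MeasurableSet B → ν B = ∑ i, c i * (μs i B).toReal)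
    (f : Euc 2 → ℝ) (hf : Continuous f) (hfc : HasCompactSupport f) :
    sInt ν f = ∑ i, c i * ∫ x, f x ∂(μs i) := by
  haveI := hfin
  set μ₁ : Measure (Euc 2) := ∑ i, ENNReal.ofReal (c i) • μs i with h1
  set μ₂ : Measure (Euc 2) := ∑ i, ENNReal.ofReal (-c i) • μs i with h2
  have hterm : ∀ (r : ℝ) (i : Fin k) (B : Set (Euc 2)),
      (ENNReal.ofReal r • μs i) B ≠ ⊤ := by
    intro r i B
    rw [Measure.smul_apply, smul_eq_mul]
    exact ENNReal.mul_ne_top ENNReal.ofReal_ne_top (measure_ne_top _ _)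
  haveI if1 : IsFiniteMeasure μ₁ := by
    constructor
    rw [h1, Measure.finset_sum_apply]
    exact ENNReal.sum_lt_top.2 fun i _ => (hterm (c i) i _).lt_top
  haveI if2 : IsFiniteMeasure μ₂ := by
    constructor
    rw [h2, Measure.finset_sum_apply]
    exact ENNReal.sum_lt_top.2 fun i _ => (hterm (-c i) i _).lt_top
  have happ : ∀ B, MeasurableSet B → ν B = (μ₁ B).toReal - (μ₂ B).toReal := by
    intro B hB
    rw [h1, h2, Measure.finset_sum_apply, Measure.finset_sum_apply,
      ENNReal.toReal_sum (fun i _ => hterm (c i) i B), ENNReal.toReal_sum (fun i _ => hterm (-c i) i B),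
      ← Finset.sum_sub_distrib, hv B hB]
    congr 1; funext i
    rw [Measure.smul_apply, Measure.smul_apply, smul_eq_mul, smul_eq_mul,
      ENNReal.toReal_mul, ENNReal.toReal_mul, ENNReal.toReal_ofReal', ENNReal.toReal_ofReal']
    rw [← sub_mul]
    congr 1
    simpa using max_sub_max_neg (c i)
  rw [sInt_eq ν μ₁ μ₂ happ f hf hfc]
  have hint : ∀ (r : ℝ) (i : Fin k), Integrable f (ENNReal.ofReal r • μs i) :=
    fun r i => (hf.integrable_of_hasCompactSupport hfc).smul_measure ENNReal.ofReal_ne_top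
  rw [h1, h2, integral_finset_sum_measure (fun i _ => hint (c i) i),
    integral_finset_sum_measure (fun i _ => hint (-c i) i), ← Finset.sum_sub_distrib]
  congr 1; funext i
  rw [integral_smul_measure, integral_smul_measure, ENNReal.toReal_ofReal', ENNReal.toReal_ofReal',
    smul_eq_mul, smul_eq_mul, ← sub_mul]
  congr 1
  simpa using max_sub_max_neg (c i)



lemma iso_smul {v : Euc 2} (hv : ‖v‖ = 1) : Isometry (fun t : ℝ => t • v) :=
  Isometry.of_dist_eq fun s t => by
    rw [dist_eq_norm, dist_eq_norm, ← sub_smul, norm_smul, hv, mul_one, Real.norm_eq_abs]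

lemma emb_smul {v : Euc 2} (hv : ‖v‖ = 1) : MeasurableEmbedding (fun t : ℝ => t • v) :=
  ((iso_smul hv).isClosedEmbedding).measurableEmbedding

lemma seg_restrict_map {v : Euc 2} (hv : ‖v‖ = 1) {A : Set ℝ} (hA : MeasurableSet A) :
    (μH[1] : Measure (Euc 2)).restrict ((fun t : ℝ => t • v) '' A) =
      Measure.map (fun t : ℝ => t • v) (volume.restrict A) := by
  have emb := emb_smul hv
  ext B hB
  rw [Measure.restrict_apply hB, emb.map_apply,
    Measure.restrict_apply (hB.preimage emb.measurable)]
  have h1 : (fun t : ℝ => t • v) '' ((fun t : ℝ => t • v) ⁻¹' B ∩ A) = B ∩ (fun t : ℝ => t • v) '' A := by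
    rw [Set.image_inter emb.injective, Set.image_preimage_eq_inter_range, Set.inter_assoc,
      Set.inter_eq_right.mpr (Set.image_subset_range _ _)]
  rw [← h1, (iso_smul hv).hausdorffMeasure_image (Or.inl zero_le_one), hausdorffMeasure_real]

lemma seg_eq_image (v : Euc 2) {L : ℝ} (hL : 0 ≤ L) :
    segment ℝ (0 : Euc 2) (L • v) = (fun t : ℝ => t • v) '' Set.Icc 0 L := by
  rcases hL.eq_or_lt with h0 | hpos
  · rw [← h0, zero_smul, segment_same, Set.Icc_self, Set.image_singleton, zero_smul]
  · rw [segment_eq_image]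
    ext p
    simp only [Set.mem_image, Set.mem_Icc, smul_eq_mul, sub_zero, zero_add, smul_zero, smul_smul]
    constructor
    · rintro ⟨t, ⟨h0, h1⟩, rfl⟩
      exact ⟨t * L, ⟨mul_nonneg h0 hL, by nlinarith⟩, rfl⟩
    · rintro ⟨t, ⟨h0, h1⟩, rfl⟩
      refine ⟨t / L, ⟨div_nonneg h0 hL, (div_le_one hpos).2 h1⟩, ?_⟩
      rw [div_mul_cancel₀ _ (ne_of_gt hpos)]

lemma measure_seg {v : Euc 2} (hv : ‖v‖ = 1) {L : ℝ} (hL : 0 ≤ L) :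
    (μH[1] : Measure (Euc 2)) ((fun t : ℝ => t • v) '' Set.Icc 0 L) = ENNReal.ofReal L := by
  rw [(iso_smul hv).hausdorffMeasure_image (Or.inl zero_le_one), hausdorffMeasure_real,
    Real.volume_Icc, sub_zero]

lemma integral_seg {v : Euc 2} (hv : ‖v‖ = 1) {A : Set ℝ} (hA : MeasurableSet A)
    (f : Euc 2 → ℝ) (hf : Continuous f) :
    ∫ x, f x ∂((μH[1] : Measure (Euc 2)).restrict ((fun t : ℝ => t • v) '' A)) =
      ∫ t in A, f (t • v) := by
  rw [seg_restrict_map hv hA,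
    integral_map (emb_smul hv).measurable.aemeasurable hf.aestronglyMeasurable]

lemma jac_cont {ψ : Euc 2 → (Fin 2 → ℝ)} (hψ : ContDiff ℝ (⊤:ℕ∞) ψ) (i' j' : Fin 2) :
    Continuous fun x => jac ψ x i' j' := by
  have h1 : Continuous (fderiv ℝ ψ) := hψ.continuous_fderiv (by simp)
  have h2 : Continuous fun x => fderiv ℝ ψ x (EuclideanSpace.single j' 1) :=
    h1.clm_apply continuous_const
  exact (continuous_apply i').comp h2

lemma jac_cpt {ψ : Euc 2 → (Fin 2 → ℝ)} (hψc : HasCompactSupport ψ) (i' j' : Fin 2) :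
    HasCompactSupport fun x => jac ψ x i' j' := by
  apply (hψc.fderiv ℝ).mono
  intro x hx
  simp only [Function.mem_support] at hx ⊢
  intro h
  apply hx
  unfold jac
  rw [h]
  rfl

lemma psi_coord_cont {ψ : Euc 2 → (Fin 2 → ℝ)} (hψ : ContDiff ℝ (⊤:ℕ∞) ψ) (i' : Fin 2) :
    Continuous fun x => ψ x i' := (continuous_apply i').comp hψ.continuous

lemma psi_coord_cpt {ψ : Euc 2 → (Fin 2 → ℝ)} (hψc : HasCompactSupport ψ) (i' : Fin 2) :
    HasCompactSupport fun x => ψ x i' := by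
  apply hψc.mono
  intro x hx
  simp only [Function.mem_support] at hx ⊢
  intro h; apply hx; rw [h]; rfl

lemma euc_decomp (u : Euc 2) : u = ∑ j : Fin 2, u j • (EuclideanSpace.single j 1 : Euc 2) := by
  ext j
  rw [Fin.sum_univ_two]
  simp only [PiLp.add_apply, PiLp.smul_apply, EuclideanSpace.single_apply, smul_eq_mul]
  fin_cases j <;> simp

lemma jac_pair {ψ : Euc 2 → (Fin 2 → ℝ)} (hψ : ContDiff ℝ (⊤:ℕ∞) ψ) (x : Euc 2)
    (u : Euc 2) (i' : Fin 2) :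
    ∑ j', jac ψ x i' j' * u j' = fderiv ℝ ψ x u i' := by
  conv_rhs => rw [euc_decomp u]
  rw [map_sum]
  have : (∑ j' : Fin 2, fderiv ℝ ψ x (u j' • EuclideanSpace.single j' 1)) i'
      = ∑ j' : Fin 2, (fderiv ℝ ψ x (u j' • EuclideanSpace.single j' 1)) i' := by
    rw [Fin.sum_univ_two, Fin.sum_univ_two]; rfl
  rw [this]
  congr 1; funext j'
  rw [ContinuousLinearMap.map_smul]
  simp only [Pi.smul_apply, smul_eq_mul, jac]
  ring

lemma curve_hasDerivAt (ψ : Euc 2 → (Fin 2 → ℝ)) (hψ : ContDiff ℝ (⊤:ℕ∞) ψ)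
    (v : Euc 2) (w : Fin 2 → ℝ) (t : ℝ) :
    HasDerivAt (fun t : ℝ => ∑ i', w i' * ψ (t • v) i')
      (∑ i', w i' * fderiv ℝ ψ (t • v) v i') t := by
  have hcurve : HasDerivAt (fun t : ℝ => t • v) v t := by
    simpa using (hasDerivAt_id t).smul_const v
  have hψd : Differentiable ℝ ψ := hψ.differentiable (by simp)
  have hcomp : HasDerivAt (fun t : ℝ => ψ (t • v)) (fderiv ℝ ψ (t • v) v) t :=
    (hψd (t • v)).hasFDerivAt.comp_hasDerivAt t hcurve
  apply HasDerivAt.fun_sum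
  intro i' _
  have hcoord : HasDerivAt (fun t : ℝ => ψ (t • v) i') (fderiv ℝ ψ (t • v) v i') t := by
    have := (ContinuousLinearMap.proj (R := ℝ) (φ := fun _ : Fin 2 => ℝ) i').hasFDerivAt.comp_hasDerivAt t hcomp
    exact this
  exact hcoord.const_mul (w i')

lemma deriv_cont (ψ : Euc 2 → (Fin 2 → ℝ)) (hψ : ContDiff ℝ (⊤:ℕ∞) ψ)
    (v : Euc 2) (w : Fin 2 → ℝ) :
    Continuous fun t : ℝ => ∑ i', w i' * fderiv ℝ ψ (t • v) v i' := by
  apply continuous_finset_sum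
  intro i' _
  apply Continuous.mul continuous_const
  have h1 : Continuous (fderiv ℝ ψ) := hψ.continuous_fderiv (by simp)
  have h2 : Continuous fun t : ℝ => fderiv ℝ ψ (t • v) v :=
    (h1.comp (by continuity)).clm_apply continuous_const
  exact (continuous_apply i').comp h2

lemma ftc (ψ : Euc 2 → (Fin 2 → ℝ)) (hψ : ContDiff ℝ (⊤:ℕ∞) ψ)
    (v : Euc 2) (w : Fin 2 → ℝ) {L : ℝ} (hL : 0 ≤ L) :
    ∫ t in Set.Icc (0:ℝ) L, (∑ i', w i' * fderiv ℝ ψ (t • v) v i') =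
      ∑ i', w i' * (ψ (L • v) i' - ψ 0 i') := by
  rw [integral_Icc_eq_integral_Ioc, ← intervalIntegral.integral_of_le hL]
  rw [intervalIntegral.integral_eq_sub_of_hasDerivAt
    (fun t _ => curve_hasDerivAt ψ hψ v w t)
    ((deriv_cont ψ hψ v w).intervalIntegrable 0 L)]
  rw [← Finset.sum_sub_distrib]
  congr 1; funext i'
  rw [zero_smul]
  ring

lemma genNorm_zero : genNorm (m:=2) (n:=2) hEuc (fun _ _ => (0:ℝ)) = 0 := by
  refine le_antisymm (genNorm_le fun M _ => le_of_eq ?_) (genNorm_nonneg _)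
  simp [frob]

lemma euc_sum_apply {k : ℕ} (f : Fin k → Euc 2) (i' : Fin 2) :
    (∑ i, f i) i' = ∑ i, f i i' := by
  classical
  induction (Finset.univ : Finset (Fin k)) using Finset.induction with
  | empty => simp only [Finset.sum_empty]; rfl
  | insert _ _ hnot ih =>
    rw [Finset.sum_insert hnot, Finset.sum_insert hnot, PiLp.add_apply, ih]

lemma tsum_le_tsum' {f g : ℕ → ℝ} (h : ∀ n, f n ≤ g n) (hf : ∀ n, 0 ≤ f n)
    (hg : Summable g) : ∑' n, f n ≤ ∑' n, g n := by
  by_cases hs : Summable f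
  · exact Summable.tsum_le_tsum h hs hg
  · rw [tsum_eq_zero_of_not_summable hs]
    exact tsum_nonneg fun n => (hf n).trans (h n)

lemma tsum_measure_partition (μ : Measure (Euc 2)) [IsFiniteMeasure μ] {B : ℕ → Set (Euc 2)}
    (hmeas : ∀ n, MeasurableSet (B n)) (hdisj : Pairwise (Function.onFun Disjoint B))
    (hcover : (⋃ n, B n) = Set.univ) : ∑' n, (μ (B n)).toReal = (μ Set.univ).toReal := by
  rw [← hcover, measure_iUnion hdisj hmeas]
  exact (ENNReal.tsum_toReal_eq fun _ => measure_ne_top _ _).symm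

lemma summable_measure_partition (μ : Measure (Euc 2)) [IsFiniteMeasure μ] {B : ℕ → Set (Euc 2)}
    (hmeas : ∀ n, MeasurableSet (B n)) (hdisj : Pairwise (Function.onFun Disjoint B))
    (hcover : (⋃ n, B n) = Set.univ) : Summable fun n => (μ (B n)).toReal := by
  apply ENNReal.summable_toReal
  rw [← measure_iUnion hdisj hmeas]
  exact measure_ne_top _ _

lemma pos_neg_null (ν : SignedMeasure (Euc 2)) {K U : Set (Euc 2)} (hU : MeasurableSet U)
    (hK : K ⊆ U) (hsupp : ∀ B, MeasurableSet B → Disjoint B K → ν B = 0) :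
    ν.toJordanDecomposition.posPart Uᶜ = 0 ∧ ν.toJordanDecomposition.negPart Uᶜ = 0 := by
  obtain ⟨i, hi₁, hi₂, hi₃, hpos, hneg⟩ := ν.toJordanDecomposition_spec
  have hdisj : ∀ A : Set (Euc 2), A ⊆ Uᶜ → Disjoint A K := by
    intro A hA
    rw [Set.disjoint_left]
    intro p hp hpK
    exact hA hp (hK hpK)
  constructor
  · rw [hpos, SignedMeasure.toMeasureOfZeroLE_apply _ _ _ hU.compl]
    have h0 : ν (i ∩ Uᶜ) = 0 :=
      hsupp _ (hi₁.inter hU.compl) (hdisj _ Set.inter_subset_right)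
    simp [h0]
  · rw [hneg, SignedMeasure.toMeasureOfLEZero_apply _ _ _ hU.compl]
    have h0 : ν (iᶜ ∩ Uᶜ) = 0 :=
      hsupp _ (hi₁.compl.inter hU.compl) (hdisj _ Set.inter_subset_right)
    simp [h0]

lemma integral_of_null_compl {μ : Measure (Euc 2)} [IsFiniteMeasure μ] {U : Set (Euc 2)}
    (hU : MeasurableSet U) (h0 : μ Uᶜ = 0) {f : Euc 2 → ℝ} (hf : Continuous f)
    (hfc : HasCompactSupport f) {c : ℝ} (hfU : ∀ x ∈ U, f x = c) :
    ∫ x, f x ∂μ = c * (μ Set.univ).toReal := by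
  have hint : Integrable f μ := hf.integrable_of_hasCompactSupport hfc
  rw [← integral_add_compl hU hint]
  have h2 : ∫ x in Uᶜ, f x ∂μ = 0 := by
    rw [Measure.restrict_eq_zero.mpr h0]
    simp
  have h1 : ∫ x in U, f x ∂μ = c * (μ U).toReal := by
    rw [setIntegral_congr_fun hU hfU, setIntegral_const, smul_eq_mul, mul_comm]
    rfl
  have h3 : μ Set.univ = μ U := by
    rw [← measure_add_measure_compl hU, h0, add_zero]
  rw [h1, h2, h3, add_zero]

lemma sInt_const_on (ν : SignedMeasure (Euc 2)) {K U : Set (Euc 2)} (hU : MeasurableSet U)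
    (hK : K ⊆ U) (hsupp : ∀ B, MeasurableSet B → Disjoint B K → ν B = 0)
    {f : Euc 2 → ℝ} (hf : Continuous f) (hfc : HasCompactSupport f) {c : ℝ}
    (hfU : ∀ x ∈ U, f x = c) :
    sInt ν f = c * ν Set.univ := by
  obtain ⟨hp0, hn0⟩ := pos_neg_null ν hU hK hsupp
  rw [jordan_apply ν MeasurableSet.univ]
  show (∫ x, f x ∂_) - (∫ x, f x ∂_) = _
  rw [integral_of_null_compl hU hp0 hf hfc hfU, integral_of_null_compl hU hn0 hf hfc hfU]
  ring

lemma abs_signed_le (ν : SignedMeasure (Euc 2)) {B : Set (Euc 2)} (hB : MeasurableSet B) :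
    |ν B| ≤ (ν.toJordanDecomposition.posPart B).toReal
      + (ν.toJordanDecomposition.negPart B).toReal := by
  rw [jordan_apply ν hB, sub_eq_add_neg]
  refine (abs_add_le _ _).trans ?_
  rw [abs_neg, abs_of_nonneg ENNReal.toReal_nonneg, abs_of_nonneg ENNReal.toReal_nonneg]

lemma exists_bump {R : ℝ} (hR : 0 < R) : ∃ ψ : Euc 2 → (Fin 2 → ℝ),
    ContDiff ℝ (⊤:ℕ∞) ψ ∧ HasCompactSupport ψ ∧
    (∀ x ∈ Metric.ball (0:Euc 2) R, ∀ i, ψ x i = x i) ∧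
    (∀ x ∈ Metric.ball (0:Euc 2) R, ∀ i' j' : Fin 2,
      jac ψ x i' j' = if i' = j' then 1 else 0) := by
  set φb : ContDiffBump (0 : Euc 2) := ⟨R, R+1, hR, by linarith⟩ with hφb
  set L := (PiLp.continuousLinearEquiv 2 ℝ (fun _ : Fin 2 => ℝ)).toContinuousLinearMap with hL
  have hLval : ∀ (y : Euc 2) (i : Fin 2), L y i = y i := fun y i => rfl
  refine ⟨fun x i => φb x * x i, ?_, ?_, ?_, ?_⟩
  · apply contDiff_pi.2
    intro i
    exact φb.contDiff.mul (((ContinuousLinearMap.proj (R := ℝ) (φ := fun _ : Fin 2 => ℝ) i).comp L).contDiff)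
  · apply φb.hasCompactSupport.mono
    intro p hp
    simp only [Function.mem_support] at hp ⊢
    intro h
    apply hp
    funext i
    rw [h]
    simp
  · intro p hp i
    show φb p * p i = p i
    rw [φb.one_of_mem_closedBall (Metric.ball_subset_closedBall hp), one_mul]
  · intro p hp i' j'
    have heq : (fun x : Euc 2 => fun i => φb x * x i) =ᶠ[nhds p] ⇑L := by
      apply Filter.eventually_of_mem (Metric.isOpen_ball.mem_nhds hp)
      intro y hy
      show (fun i => φb y * y i) = L y
      funext i
      rw [φb.one_of_mem_closedBall (Metric.ball_subset_closedBall hy), one_mul]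
      rfl
    unfold jac
    rw [heq.fderiv_eq, L.fderiv, hLval, EuclideanSpace.single_apply]

end S13

/-- arbitrary degree junction: with `h` the Euclidean norm on `ℝ²`,
pairwise distinct unit vectors `e_1, …, e_k ∈ S¹ ∩ [0,1]²` (`k ≥ 3`), coefficients
`a_i` (positive for `i ≤ j`, negative for `i > j`) with `Σ a_i e_i = 0`, multiplicities
`θ_i = |a_i| e_i`, lengths `l_i > 0` and end points `x_i = ± l_i e_i`, the network
`F = Σ_i θ_i ⊗ e_i ℋ¹⌞s_i` satisfies `∂F = F₀`, `|F|_H = Σ_i |a_i| l_i`, and `F`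
minimizes `|·|_H` among all compactly supported measures `G` with `∂G = F₀`. -/
theorem statement13 (k : ℕ) (hk : 3 ≤ k)
    (e : Fin k → Euc 2) (he : ∀ i, ‖e i‖ = 1)
    (heQ : ∀ i, 0 ≤ e i 0 ∧ e i 0 ≤ 1 ∧ 0 ≤ e i 1 ∧ e i 1 ≤ 1)
    (hinj : Function.Injective e)
    (j : ℕ) (hj1 : 1 ≤ j) (hjk : j < k)
    (a : Fin k → ℝ) (ha : ∀ i : Fin k, if (i : ℕ) < j then 0 < a i else a i < 0)
    (hsum : ∑ i, a i • e i = 0)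
    (l : Fin k → ℝ) (hl : ∀ i, 0 < l i)
    (θ : Fin k → Fin 2 → ℝ) (hθ : ∀ i, θ i = fun i' => |a i| * e i i')
    (x : Fin k → Euc 2) (hx : ∀ i, x i = (if (i : ℕ) < j then l i else -l i) • e i)
    (s : Fin k → Set (Euc 2))
    (hs : ∀ i, s i = if (i : ℕ) < j then segment ℝ 0 (x i) else segment ℝ (x i) 0)
    (F : MatMeas 2 2)
    (hF : ∀ B : Set (Euc 2), MeasurableSet B → ∀ i' j',
      F i' j' B = ∑ i, (μH[1] (B ∩ s i)).toReal * (θ i i' * e i j'))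
    (F0 : VecMeas 2 2)
    (hF0 : ∀ B : Set (Euc 2), MeasurableSet B → ∀ i',
      F0 i' B = ∑ i : Fin k, (if (i : ℕ) < j then θ i i' else -θ i i') * dirac01 (x i) B) :
    isBoundary F F0 ∧ tvH hEuc F = ∑ i, |a i| * l i ∧
    ∀ G : MatMeas 2 2, suppInCpt G → isBoundary G F0 → tvH hEuc F ≤ tvH hEuc G := by
  classical
  open S13 in
  haveI hNA : NoAtoms (μH[1] : Measure (Euc 2)) := Measure.noAtoms_hausdorff _ one_pos
  -- direction vectors
  set v : Fin k → Euc 2 := fun i => if (i : ℕ) < j then e i else -e i with hv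
  have hvn : ∀ i, ‖v i‖ = 1 := by
    intro i; rw [hv]; dsimp only; split
    · exact he i
    · rw [norm_neg]; exact he i
  have hxv : ∀ i, x i = l i • v i := by
    intro i; rw [hx i, hv]; dsimp only; split
    · rfl
    · rw [neg_smul, ← smul_neg]
  have hσv : ∀ (i : Fin k) (i'' : Fin 2), e i i'' = (if (i : ℕ) < j then (1:ℝ) else -1) * v i i'' := by
    intro i i''; rw [hv]; dsimp only; split
    · rw [one_mul]
    · rw [PiLp.neg_apply, neg_mul, one_mul, neg_neg]
  have hsegi : ∀ i, s i = (fun t : ℝ => t • v i) '' Set.Icc 0 (l i) := by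
    intro i; rw [hs i]
    by_cases hij : (i : ℕ) < j
    · rw [if_pos hij, hxv i, seg_eq_image (v i) (hl i).le]
    · rw [if_neg hij, segment_symm, hxv i, seg_eq_image (v i) (hl i).le]
  set ν : Fin k → Measure (Euc 2) := fun i => (μH[1] : Measure (Euc 2)).restrict (s i) with hνdef
  have hsm : ∀ i, MeasurableSet (s i) := by
    intro i; rw [hsegi i]
    exact (emb_smul (hvn i)).measurableSet_image.2 measurableSet_Icc
  have hνuniv : ∀ i, ν i Set.univ = ENNReal.ofReal (l i) := by
    intro i
    rw [hνdef]; dsimp only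
    rw [Measure.restrict_apply_univ, hsegi i, measure_seg (hvn i) (hl i).le]
  haveI hνfin : ∀ i, IsFiniteMeasure (ν i) := by
    intro i; constructor; rw [hνuniv i]; exact ENNReal.ofReal_lt_top
  have hνB : ∀ (B : Set (Euc 2)), MeasurableSet B → ∀ i, ν i B = μH[1] (B ∩ s i) :=
    fun B hB i => Measure.restrict_apply hB
  have hFrep : ∀ (i' j' : Fin 2) (B : Set (Euc 2)), MeasurableSet B →
      F i' j' B = ∑ i, (θ i i' * e i j') * (ν i B).toReal := by
    intro i' j' B hB; rw [hF B hB]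
    exact Finset.sum_congr rfl fun i _ => by rw [hνB B hB i]; ring
  have hθe : ∀ i, hEuc (θ i) = |a i| := by
    intro i
    have hrw : θ i = |a i| • (fun i' => e i i') := by
      rw [hθ i]; funext i'; simp
    rw [hrw, hEuc_smul, hEuc_eq_norm, he i, abs_abs, mul_one]
  have hσa : ∀ i : Fin k, (if (i : ℕ) < j then (1:ℝ) else -1) * |a i| = a i := by
    intro i
    have := ha i
    by_cases hij : (i : ℕ) < j
    · rw [if_pos hij] at this ⊢; rw [one_mul, abs_of_pos this]
    · rw [if_neg hij] at this ⊢; rw [neg_one_mul, abs_of_neg this, neg_neg]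
  -- F0 representation and sInt of F0
  have hF0rep : ∀ (i' : Fin 2) (B : Set (Euc 2)), MeasurableSet B →
      F0 i' B = ∑ i : Fin k, ((if (i : ℕ) < j then (1:ℝ) else -1) * θ i i') * ((Measure.dirac (x i)) B).toReal := by
    intro i' B hB
    rw [hF0 B hB]
    refine Finset.sum_congr rfl fun i _ => ?_
    rw [Measure.dirac_apply' _ hB]
    have hind : ((B.indicator (1 : Euc 2 → ℝ≥0∞) (x i))).toReal = dirac01 (x i) B := by
      unfold dirac01
      by_cases hmem : x i ∈ B <;> simp [Set.indicator_apply, hmem]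
    rw [hind]
    by_cases hij : (i : ℕ) < j <;> simp [hij]
  have hRHSrep : ∀ ψ : Euc 2 → (Fin 2 → ℝ), ContDiff ℝ (⊤ : ℕ∞) ψ → HasCompactSupport ψ →
      ∀ i', sInt (F0 i') (fun p => ψ p i') =
        ∑ i : Fin k, ((if (i : ℕ) < j then (1:ℝ) else -1) * θ i i') * ψ (x i) i' := by
    intro ψ hψ hψc i'
    rw [sInt_comb (F0 i') _ (fun i => Measure.dirac (x i)) (fun i => by infer_instance)
      (fun B hB => hF0rep i' B hB) _ (psi_coord_cont hψ i') (psi_coord_cpt hψc i')]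
    exact Finset.sum_congr rfl fun i _ => by rw [integral_dirac]
  -- the sum Σ a_i e_i = 0, coordinatewise
  have hz : ∀ i'' : Fin 2, ∑ i : Fin k, ((if (i : ℕ) < j then (1:ℝ) else -1) * θ i i'') = 0 := by
    intro i''
    have h1 : ∀ i : Fin k, (if (i : ℕ) < j then (1:ℝ) else -1) * θ i i'' = (a i • e i) i'' := by
      intro i
      rw [hθ i]
      show _ * (|a i| * e i i'') = a i * e i i''
      rw [← mul_assoc, hσa i]
    rw [Finset.sum_congr rfl fun i _ => h1 i, ← euc_sum_apply, hsum]
    rfl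
  -- CLAIM A : isBoundary F F0
  have claimA : isBoundary F F0 := by
    intro ψ hψ hψc
    have hsInt : ∀ i' j' : Fin 2, sInt (F i' j') (fun p => jac ψ p i' j')
        = ∑ i, (θ i i' * e i j') * ∫ p, jac ψ p i' j' ∂ν i := fun i' j' =>
      sInt_comb (F i' j') (fun i => θ i i' * e i j') ν hνfin
        (fun B hB => hFrep i' j' B hB) _ (jac_cont hψ i' j') (jac_cpt hψc i' j')
    have hIseg : ∀ (i : Fin k) (f : Euc 2 → ℝ), Continuous f →
        ∫ p, f p ∂ν i = ∫ t in Set.Icc (0:ℝ) (l i), f (t • v i) := by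
      intro i f hf
      rw [hνdef]; dsimp only
      rw [hsegi i]
      exact integral_seg (hvn i) measurableSet_Icc f hf
    have hperi : ∀ i : Fin k,
        (∑ i', ∑ j', (θ i i' * e i j') * ∫ t in Set.Icc (0:ℝ) (l i), jac ψ (t • v i) i' j')
        = (if (i : ℕ) < j then (1:ℝ) else -1) * ∑ i', θ i i' * (ψ (x i) i' - ψ 0 i') := by
      intro i
      have hcont : ∀ i' j' : Fin 2, Continuous fun t : ℝ => jac ψ (t • v i) i' j' :=
        fun i' j' => (jac_cont hψ i' j').comp (continuous_id.smul continuous_const)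
      have h2 : ∀ i' : Fin 2,
          (∑ j', (θ i i' * e i j') * ∫ t in Set.Icc (0:ℝ) (l i), jac ψ (t • v i) i' j')
          = (if (i : ℕ) < j then (1:ℝ) else -1) *
            (θ i i' * ∫ t in Set.Icc (0:ℝ) (l i), fderiv ℝ ψ (t • v i) (v i) i') := by
        intro i'
        have e1 : ∀ j' : Fin 2, (θ i i' * e i j') * (∫ t in Set.Icc (0:ℝ) (l i), jac ψ (t • v i) i' j')
            = ((if (i : ℕ) < j then (1:ℝ) else -1) * θ i i') *
              ∫ t in Set.Icc (0:ℝ) (l i), v i j' * jac ψ (t • v i) i' j' := by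
          intro j'
          rw [MeasureTheory.integral_const_mul]
          rw [hσv i j']
          ring
        rw [Finset.sum_congr rfl fun j' _ => e1 j', ← Finset.mul_sum,
          ← MeasureTheory.integral_finset_sum _ (f := fun j' t => v i j' * jac ψ (t • v i) i' j')
            (fun j' _ => (continuous_const.mul (hcont i' j')).integrableOn_Icc)]
        rw [mul_assoc]
        congr 2
        refine MeasureTheory.setIntegral_congr_fun measurableSet_Icc fun t _ => ?_
        rw [← jac_pair hψ (t • v i) (v i) i']
        exact Finset.sum_congr rfl fun j' _ => mul_comm _ _
      rw [Finset.sum_congr rfl fun i' _ => h2 i', ← Finset.mul_sum]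
      congr 1
      have e3 : ∀ i' : Fin 2, θ i i' * (∫ t in Set.Icc (0:ℝ) (l i), fderiv ℝ ψ (t • v i) (v i) i')
          = ∫ t in Set.Icc (0:ℝ) (l i), θ i i' * fderiv ℝ ψ (t • v i) (v i) i' := by
        intro i'
        rw [MeasureTheory.integral_const_mul]
      have hdcont : ∀ i' : Fin 2, Continuous fun t : ℝ => θ i i' * fderiv ℝ ψ (t • v i) (v i) i' := by
        intro i'
        apply Continuous.mul continuous_const
        have h1 : Continuous (fderiv ℝ ψ) := hψ.continuous_fderiv (by simp)
        have hsm : Continuous fun t : ℝ => t • v i := continuous_id.smul continuous_const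
        exact (continuous_apply i').comp ((h1.comp hsm).clm_apply continuous_const)
      rw [Finset.sum_congr rfl fun i' _ => e3 i',
        ← MeasureTheory.integral_finset_sum _ (fun i' _ => (hdcont i').integrableOn_Icc),
        ftc ψ hψ (v i) (θ i) (hl i).le, ← hxv i]
    calc (∑ i', ∑ j', sInt (F i' j') fun p => jac ψ p i' j')
        = ∑ i', ∑ j', ∑ i, (θ i i' * e i j') * ∫ t in Set.Icc (0:ℝ) (l i), jac ψ (t • v i) i' j' := by
          refine Finset.sum_congr rfl fun i' _ => Finset.sum_congr rfl fun j' _ => ?_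
          rw [hsInt i' j']
          exact Finset.sum_congr rfl fun i _ => by rw [hIseg i _ (jac_cont hψ i' j')]
      _ = ∑ i : Fin k, ∑ i', ∑ j', (θ i i' * e i j') * ∫ t in Set.Icc (0:ℝ) (l i), jac ψ (t • v i) i' j' := by
          rw [Finset.sum_congr rfl fun i' (_ : i' ∈ Finset.univ) => (Finset.sum_comm)]
          exact Finset.sum_comm
      _ = ∑ i : Fin k, (if (i : ℕ) < j then (1:ℝ) else -1) * ∑ i', θ i i' * (ψ (x i) i' - ψ 0 i') := by
          exact Finset.sum_congr rfl fun i _ => hperi i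
      _ = ∑ i : Fin k, ∑ i', (((if (i : ℕ) < j then (1:ℝ) else -1) * θ i i') * ψ (x i) i'
            - ((if (i : ℕ) < j then (1:ℝ) else -1) * θ i i') * ψ 0 i') := by
          refine Finset.sum_congr rfl fun i _ => ?_
          rw [Finset.mul_sum]
          exact Finset.sum_congr rfl fun i' _ => by ring
      _ = (∑ i : Fin k, ∑ i', ((if (i : ℕ) < j then (1:ℝ) else -1) * θ i i') * ψ (x i) i')
            - ∑ i : Fin k, ∑ i', ((if (i : ℕ) < j then (1:ℝ) else -1) * θ i i') * ψ 0 i' := by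
          rw [← Finset.sum_sub_distrib]
          exact Finset.sum_congr rfl fun i _ => by rw [← Finset.sum_sub_distrib]
      _ = ∑ i', sInt (F0 i') fun p => ψ p i' := by
          have hzero : (∑ i : Fin k, ∑ i', ((if (i : ℕ) < j then (1:ℝ) else -1) * θ i i') * ψ 0 i') = 0 := by
            rw [Finset.sum_comm]
            apply Finset.sum_eq_zero
            intro i' _
            rw [← Finset.sum_mul, hz i', zero_mul]
          rw [hzero, sub_zero, Finset.sum_comm]
          exact Finset.sum_congr rfl fun i' _ => (hRHSrep ψ hψ hψc i').symm
  -- CLAIM B : tvH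
  set S := ∑ i, |a i| * l i with hSdef
  have hS0 : 0 ≤ S := Finset.sum_nonneg fun i _ => mul_nonneg (abs_nonneg _) (hl i).le
  have hub : ∀ r ∈ {r | ∃ B : ℕ → Set (Euc 2), (∀ n, MeasurableSet (B n)) ∧
      Pairwise (Function.onFun Disjoint B) ∧ (⋃ n, B n) = Set.univ ∧
      r = ∑' n, genNorm hEuc (fun i' j' => F i' j' (B n))}, r ≤ S := by
    rintro r ⟨B, hBm, hBd, hBu, rfl⟩
    have hsummable : ∀ i : Fin k, Summable fun n => (ν i (B n)).toReal * |a i| :=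
      fun i => (summable_measure_partition (ν i) hBm hBd hBu).mul_right _
    have hpt : ∀ n, genNorm hEuc (fun i' j' => F i' j' (B n)) ≤ ∑ i, (ν i (B n)).toReal * |a i| := by
      intro n
      have hrw : (fun i' j' => F i' j' (B n))
          = fun i' j' => ∑ i, (ν i (B n)).toReal * (θ i i' * e i j') := by
        funext i' j'
        rw [hFrep i' j' _ (hBm n)]
        exact Finset.sum_congr rfl fun i _ => by ring
      rw [hrw]
      refine (genNorm_comb_le _ (fun i => ENNReal.toReal_nonneg) θ e (fun i => (he i).le)).trans ?_
      exact le_of_eq (Finset.sum_congr rfl fun i _ => by rw [hθe i])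
    refine (tsum_le_tsum' hpt (fun n => genNorm_nonneg _) (summable_sum fun i _ => hsummable i)).trans ?_
    rw [Summable.tsum_finsetSum fun i _ => hsummable i]
    apply le_of_eq
    refine Finset.sum_congr rfl fun i _ => ?_
    rw [tsum_mul_right, tsum_measure_partition (ν i) hBm hBd hBu, hνuniv i,
      ENNReal.toReal_ofReal (hl i).le, mul_comm]
  have hmemS : S ∈ {r | ∃ B : ℕ → Set (Euc 2), (∀ n, MeasurableSet (B n)) ∧
      Pairwise (Function.onFun Disjoint B) ∧ (⋃ n, B n) = Set.univ ∧
      r = ∑' n, genNorm hEuc (fun i' j' => F i' j' (B n))} := by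
    -- segments meet only at the origin
    have hC : ∀ i1 i2 : Fin k, i1 ≠ i2 → s i1 ∩ s i2 ⊆ {0} := by
      intro i1 i2 hne p hp
      obtain ⟨hp1, hp2⟩ := hp
      rw [hsegi i1] at hp1
      rw [hsegi i2] at hp2
      obtain ⟨t1, ht1, hpt1'⟩ := hp1
      obtain ⟨t2, ht2, hpt2'⟩ := hp2
      have hpt1 : t1 • v i1 = p := hpt1'
      have hpt2 : t2 • v i2 = p := hpt2' 
      by_contra hp0
      simp only [Set.mem_singleton_iff] at hp0
      have ht1ne : t1 ≠ 0 := by rintro rfl; exact hp0 (by rw [← hpt1, zero_smul])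
      have ht2ne : t2 ≠ 0 := by rintro rfl; exact hp0 (by rw [← hpt2, zero_smul])
      have ht1pos : 0 < t1 := lt_of_le_of_ne ht1.1 (Ne.symm ht1ne)
      have ht2pos : 0 < t2 := lt_of_le_of_ne ht2.1 (Ne.symm ht2ne)
      have heqq : t1 • v i1 = t2 • v i2 := by rw [hpt1, hpt2]
      have htt : t1 = t2 := by
        have hn := congrArg norm heqq
        rw [norm_smul, norm_smul, hvn i1, hvn i2, mul_one, mul_one,
          Real.norm_eq_abs, Real.norm_eq_abs, abs_of_pos ht1pos, abs_of_pos ht2pos] at hn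
        exact hn
      subst htt
      have hvv : v i1 = v i2 := smul_right_injective (Euc 2) ht1ne heqq
      -- now case analysis on the signs
      rw [hv] at hvv
      dsimp only at hvv
      have hcontra : ∀ (w1 w2 : Fin k), e w1 = -e w2 → False := by
        intro w1 w2 hww
        have h00 : e w1 0 = -(e w2 0) := by rw [hww]; rfl
        have h11 : e w1 1 = -(e w2 1) := by rw [hww]; rfl
        obtain ⟨q1, _, q2, _⟩ := heQ w1
        obtain ⟨q3, _, q4, _⟩ := heQ w2
        have hz0 : e w1 0 = 0 := le_antisymm (by rw [h00]; linarith) q1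
        have hz1 : e w1 1 = 0 := le_antisymm (by rw [h11]; linarith) q2
        have : ‖e w1‖ = 0 := by
          rw [← hEuc_eq_norm, hEuc]
          simp [hz0, hz1]
        rw [he w1] at this
        norm_num at this
      by_cases h1 : (i1 : ℕ) < j <;> by_cases h2 : (i2 : ℕ) < j
      · rw [if_pos h1, if_pos h2] at hvv; exact hne (hinj hvv)
      · rw [if_pos h1, if_neg h2] at hvv; exact hcontra i1 i2 hvv
      · rw [if_neg h1, if_pos h2] at hvv
        exact hcontra i2 i1 (by rw [hvv])
      · rw [if_neg h1, if_neg h2] at hvv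
        exact hne (hinj (neg_injective hvv))
    set C : Fin k → Set (Euc 2) := fun i => s i \ {0} with hCdef
    have hCm : ∀ i, MeasurableSet (C i) := fun i => (hsm i).diff (measurableSet_singleton 0)
    have hCdisj : ∀ i1 i2 : Fin k, i1 ≠ i2 → Disjoint (C i1) (C i2) := by
      intro i1 i2 hne
      rw [Set.disjoint_left]
      intro p hp1 hp2
      exact hp1.2 (hC i1 i2 hne ⟨hp1.1, hp2.1⟩)
    set B : ℕ → Set (Euc 2) := fun n =>
      if h : n < k then C ⟨n, h⟩ else if n = k then (⋃ i, C i)ᶜ else ∅ with hBdef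
    have hBm : ∀ n, MeasurableSet (B n) := by
      intro n
      rw [hBdef]; dsimp only
      split
      · exact hCm _
      · split
        · exact (MeasurableSet.iUnion fun i => hCm i).compl
        · exact MeasurableSet.empty
    have hBsub : ∀ (n : ℕ) (h : n < k), B n = C ⟨n, h⟩ := by
      intro n h; rw [hBdef]; dsimp only; rw [dif_pos h]
    have hBk : B k = (⋃ i, C i)ᶜ := by
      rw [hBdef]; dsimp only; rw [dif_neg (lt_irrefl k), if_pos rfl]
    have hBe : ∀ n, k < n → B n = ∅ := by
      intro n hn; rw [hBdef]; dsimp only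
      rw [dif_neg (by omega), if_neg (by omega)]
    have hBd : Pairwise (Function.onFun Disjoint B) := by
      intro m n hmn
      show Disjoint (B m) (B n)
      have hCU : ∀ (m' : ℕ) (h : m' < k), Disjoint (C ⟨m', h⟩) ((⋃ i, C i)ᶜ) := by
        intro m' h
        rw [Set.disjoint_left]
        intro p hp hpc
        exact hpc (Set.mem_iUnion.2 ⟨⟨m', h⟩, hp⟩)
      rcases lt_trichotomy m k with h1 | h1 | h1 <;> rcases lt_trichotomy n k with h2 | h2 | h2
      · rw [hBsub m h1, hBsub n h2]
        exact hCdisj _ _ (by simp only [ne_eq, Fin.mk.injEq]; omega)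
      · rw [hBsub m h1, h2, hBk]; exact hCU m h1
      · rw [hBe n h2]; exact Set.disjoint_empty _
      · rw [hBsub n h2, h1, hBk]; exact (hCU n h2).symm
      · omega
      · rw [hBe n h2]; exact Set.disjoint_empty _
      · rw [hBe m h1]; exact Set.empty_disjoint _
      · rw [hBe m h1]; exact Set.empty_disjoint _
      · rw [hBe m h1]; exact Set.empty_disjoint _
    have hBu : (⋃ n, B n) = Set.univ := by
      rw [Set.eq_univ_iff_forall]
      intro p
      rw [Set.mem_iUnion]
      by_cases hp : p ∈ ⋃ i, C i
      · obtain ⟨i, hi⟩ := Set.mem_iUnion.1 hp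
        exact ⟨(i : ℕ), by rw [hBsub (i : ℕ) i.isLt, Fin.eta]; exact hi⟩
      · exact ⟨k, by rw [hBk]; exact hp⟩
    refine ⟨B, hBm, hBd, hBu, ?_⟩
    have hgen : ∀ (n : ℕ) (h : n < k),
        genNorm hEuc (fun i' j' => F i' j' (B n)) = |a ⟨n, h⟩| * l ⟨n, h⟩ := by
      intro n h
      have hνC : ∀ i : Fin k, (ν i (C ⟨n, h⟩)).toReal = if i = ⟨n, h⟩ then l i else 0 := by
        intro i
        rw [hνB _ (hCm _) i]
        by_cases hi : i = ⟨n, h⟩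
        · rw [if_pos hi, ← hi]
          show (μH[1] ((s i \ {0}) ∩ s i)).toReal = l i
          have hin : (s i \ {0}) ∩ s i = s i \ {0} := Set.inter_eq_left.mpr Set.diff_subset
          rw [hin, measure_diff_null (NullSingletonClass.measure_singleton (self := hNA) 0), hsegi i,
            measure_seg (hvn i) (hl i).le, ENNReal.toReal_ofReal (hl i).le]
        · rw [if_neg hi]
          have hnull : C ⟨n, h⟩ ∩ s i ⊆ (∅ : Set (Euc 2)) := by
            intro p hp
            exact absurd (hC _ _ (fun hh => hi hh.symm) ⟨hp.1.1, hp.2⟩) hp.1.2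
          rw [measure_mono_null hnull measure_empty]
          rfl
      have hFval : (fun i' j' => F i' j' (B n))
          = outer (fun i' => l ⟨n, h⟩ * θ ⟨n, h⟩ i') (e ⟨n, h⟩) := by
        funext i' j'
        rw [hBsub n h, hFrep i' j' _ (hCm _)]
        rw [Finset.sum_congr rfl fun i (_ : i ∈ Finset.univ) => by rw [hνC i]]
        rw [Finset.sum_eq_single (⟨n, h⟩ : Fin k)]
        · rw [if_pos rfl, outer]; ring
        · intro b _ hb; rw [if_neg hb, mul_zero]
        · intro hmem; exact absurd (Finset.mem_univ _) hmem
      rw [hFval, genNorm_outer _ _ (he _)]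
      have : (fun i' => l ⟨n, h⟩ * θ ⟨n, h⟩ i') = l ⟨n, h⟩ • θ ⟨n, h⟩ := by
        funext i'; simp
      rw [this, hEuc_smul, hθe, abs_of_pos (hl _), mul_comm]
    have hgenk : genNorm hEuc (fun i' j' => F i' j' (B k)) = 0 := by
      have hFval : (fun i' j' => F i' j' (B k)) = (fun _ _ => (0:ℝ)) := by
        funext i' j'
        rw [hBk, hFrep i' j' _ (MeasurableSet.iUnion fun i => hCm i).compl]
        apply Finset.sum_eq_zero
        intro i _
        have hnull : (⋃ i', C i')ᶜ ∩ s i ⊆ {0} := by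
          intro p hp
          by_contra hp0
          exact hp.1 (Set.mem_iUnion.2 ⟨i, hp.2, hp0⟩)
        rw [hνB _ (MeasurableSet.iUnion fun i' => hCm i').compl,
          measure_mono_null hnull (NullSingletonClass.measure_singleton (self := hNA) 0)]
        simp
      rw [hFval, genNorm_zero]
    show S = ∑' n, genNorm hEuc (fun i' j' => F i' j' (B n))
    rw [tsum_eq_sum (s := Finset.range (k + 1)) ?_]
    · rw [Finset.sum_range_succ, hgenk, add_zero]
      rw [← Fin.sum_univ_eq_sum_range (fun n => genNorm hEuc (fun i' j' => F i' j' (B n))) k]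
      exact Finset.sum_congr rfl fun i _ => by rw [hgen (i : ℕ) i.isLt, Fin.eta]
    · intro n hn
      rw [Finset.mem_range] at hn
      have hFval : (fun i' j' => F i' j' (B n)) = (fun _ _ => (0:ℝ)) := by
        funext i' j'
        rw [hBe n (by omega)]
        exact (F i' j').empty
      rw [hFval, genNorm_zero]
  have claimB : tvH hEuc F = S :=
    le_antisymm (Real.sSup_le hub hS0) (le_csSup ⟨S, hub⟩ hmemS)
  refine ⟨claimA, claimB, ?_⟩
  -- CLAIM C : minimality
  intro G hGc hGb
  obtain ⟨K, hKcomp, hKsupp⟩ := hGc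
  obtain ⟨R₀, hR₀⟩ := hKcomp.isBounded.subset_ball (0 : Euc 2)
  set R := max R₀ ((∑ i, ‖x i‖) + 1) with hRdef
  have hsum_nonneg : (0:ℝ) ≤ ∑ i, ‖x i‖ := Finset.sum_nonneg fun i _ => norm_nonneg _
  have hRpos : 0 < R := lt_of_lt_of_le (by linarith) (le_max_right _ _)
  have hKR : K ⊆ Metric.ball 0 R := hR₀.trans (Metric.ball_subset_ball (le_max_left _ _))
  have hxR : ∀ i, x i ∈ Metric.ball (0 : Euc 2) R := by
    intro i
    rw [Metric.mem_ball, dist_zero_right]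
    calc ‖x i‖ ≤ ∑ i', ‖x i'‖ := Finset.single_le_sum (fun i' _ => norm_nonneg _) (Finset.mem_univ i)
      _ < (∑ i', ‖x i'‖) + 1 := by linarith
      _ ≤ R := le_max_right _ _
  obtain ⟨ψ, hψ, hψc, hψid, hψjac⟩ := exists_bump hRpos
  have hbd := hGb ψ hψ hψc
  have hLHS : (∑ i', ∑ j', sInt (G i' j') fun p => jac ψ p i' j') = ∑ i' : Fin 2, G i' i' Set.univ := by
    have h1 : ∀ i' j' : Fin 2, sInt (G i' j') (fun p => jac ψ p i' j')
        = (if i' = j' then (1:ℝ) else 0) * G i' j' Set.univ :=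
      fun i' j' => sInt_const_on (G i' j') Metric.isOpen_ball.measurableSet hKR
        (fun B hB hd => hKsupp B hB hd i' j') (jac_cont hψ i' j') (jac_cpt hψc i' j')
        (fun p hp => hψjac p hp i' j')
    rw [Finset.sum_congr rfl fun i' (_ : i' ∈ Finset.univ) =>
      Finset.sum_congr rfl fun j' _ => h1 i' j']
    refine Finset.sum_congr rfl fun i' _ => ?_
    rw [Fin.sum_univ_two]
    fin_cases i' <;> norm_num
  have hRHS : (∑ i', sInt (F0 i') fun p => ψ p i') = S := by
    rw [Finset.sum_congr rfl fun i' (_ : i' ∈ Finset.univ) => hRHSrep ψ hψ hψc i',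
      Finset.sum_comm, hSdef]
    refine Finset.sum_congr rfl fun i _ => ?_
    have hψx : ∀ i' : Fin 2, ψ (x i) i' = x i i' := fun i' => hψid (x i) (hxR i) i'
    calc ∑ i', ((if (i:ℕ) < j then (1:ℝ) else -1) * θ i i') * ψ (x i) i'
        = ∑ i', ((if (i:ℕ) < j then (1:ℝ) else -1) * θ i i') * (l i * v i i') := by
          refine Finset.sum_congr rfl fun i' _ => ?_
          rw [hψx i', hxv i]
          rfl
      _ = |a i| * l i := by
          have hexp : ∀ i' : Fin 2, ((if (i:ℕ) < j then (1:ℝ) else -1) * θ i i') * (l i * v i i')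
              = (|a i| * l i) * (v i i' * v i i') := by
            intro i'
            rw [hθ i]
            show ((if (i:ℕ) < j then (1:ℝ) else -1) * (|a i| * e i i')) * (l i * v i i') = _
            rw [hσv i i']
            by_cases hij : (i : ℕ) < j
            · simp only [if_pos hij]; ring
            · simp only [if_neg hij]; ring
          rw [Finset.sum_congr rfl fun i' _ => hexp i', ← Finset.mul_sum]
          have hvsum : ∑ i' : Fin 2, v i i' * v i i' = 1 := by
            have h1 := hEuc_unit (hvn i)
            rw [Fin.sum_univ_two]
            nlinarith [h1]
          rw [hvsum, mul_one]
  have hSval : S = ∑ i' : Fin 2, G i' i' Set.univ := by rw [← hLHS, hbd, hRHS]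
  have hMid : inSubdiffH (m := 2) (n := 2) hEuc (fun i'' j'' => if i'' = j'' then (1:ℝ) else 0) := by
    intro u hu
    have hmv : matVec (fun i'' j'' => if i'' = j'' then (1:ℝ) else 0) u = fun i'' => u i'' := by
      funext i''
      show (∑ j'', (if i'' = j'' then (1:ℝ) else 0) * u j'') = u i''
      simp [ite_mul]
    rw [dualNorm_hEuc, hmv, hEuc_eq_norm]
    exact hu
  have hfrob : frob (fun i'' j'' => if i'' = j'' then (1:ℝ) else 0)
      (fun i' j' => G i' j' Set.univ) = ∑ i' : Fin 2, G i' i' Set.univ := by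
    show (∑ i', ∑ j', _) = _
    rw [Fin.sum_univ_two, Fin.sum_univ_two, Fin.sum_univ_two, Fin.sum_univ_two]
    norm_num
  have hGbdd : BddAbove {r | ∃ B : ℕ → Set (Euc 2), (∀ n, MeasurableSet (B n)) ∧
      Pairwise (Function.onFun Disjoint B) ∧ (⋃ n, B n) = Set.univ ∧
      r = ∑' n, genNorm hEuc (fun i' j' => G i' j' (B n))} := by
    refine ⟨∑ i' : Fin 2, ∑ j' : Fin 2,
      (((G i' j').toJordanDecomposition.posPart Set.univ).toReal
        + ((G i' j').toJordanDecomposition.negPart Set.univ).toReal), ?_⟩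
    rintro r ⟨B, hBm, hBd, hBu, rfl⟩
    have hsump : ∀ i' j' : Fin 2, Summable fun n =>
        (((G i' j').toJordanDecomposition.posPart (B n)).toReal
          + ((G i' j').toJordanDecomposition.negPart (B n)).toReal) :=
      fun i' j' => (summable_measure_partition _ hBm hBd hBu).add
        (summable_measure_partition _ hBm hBd hBu)
    have hpt : ∀ n, genNorm hEuc (fun i' j' => G i' j' (B n)) ≤ ∑ i' : Fin 2, ∑ j' : Fin 2,
        (((G i' j').toJordanDecomposition.posPart (B n)).toReal
          + ((G i' j').toJordanDecomposition.negPart (B n)).toReal) := by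
      intro n
      refine (genNorm_le_sum_abs _).trans ?_
      exact Finset.sum_le_sum fun i' _ => Finset.sum_le_sum fun j' _ =>
        abs_signed_le (G i' j') (hBm n)
    refine (tsum_le_tsum' hpt (fun n => genNorm_nonneg _)
      (summable_sum fun i' _ => summable_sum fun j' _ => hsump i' j')).trans ?_
    rw [Summable.tsum_finsetSum fun i' (_ : i' ∈ Finset.univ) => summable_sum fun j' _ => hsump i' j']
    refine Finset.sum_le_sum fun i' _ => ?_
    rw [Summable.tsum_finsetSum fun j' (_ : j' ∈ Finset.univ) => hsump i' j']
    refine Finset.sum_le_sum fun j' _ => ?_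
    rw [Summable.tsum_add (summable_measure_partition _ hBm hBd hBu)
        (summable_measure_partition _ hBm hBd hBu),
      tsum_measure_partition _ hBm hBd hBu, tsum_measure_partition _ hBm hBd hBu]
  have hmemG : genNorm hEuc (fun i' j' => G i' j' Set.univ) ∈
      {r | ∃ B : ℕ → Set (Euc 2), (∀ n, MeasurableSet (B n)) ∧
        Pairwise (Function.onFun Disjoint B) ∧ (⋃ n, B n) = Set.univ ∧
        r = ∑' n, genNorm hEuc (fun i' j' => G i' j' (B n))} := by
    refine ⟨fun n => if n = 0 then Set.univ else ∅, ?_, ?_, ?_, ?_⟩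
    · intro n; by_cases h : n = 0 <;> simp [h]
    · intro m n hmn
      show Disjoint _ _
      by_cases h1 : m = 0 <;> by_cases h2 : n = 0 <;> simp [h1, h2]
      omega
    · exact Set.eq_univ_of_forall fun p => Set.mem_iUnion.2 ⟨0, by simp⟩
    · rw [tsum_eq_sum (s := {0}) ?_]
      · rw [Finset.sum_singleton]
        norm_num
      · intro n hn
        have hne : n ≠ 0 := by simpa using hn
        have hFe : (fun i' j' => G i' j' (if n = 0 then Set.univ else ∅)) = fun _ _ => (0:ℝ) := by
          funext i' j'
          rw [if_neg hne]
          exact (G i' j').empty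
        rw [hFe, genNorm_zero]
  calc tvH hEuc F = S := claimB
    _ = frob (fun i'' j'' => if i'' = j'' then (1:ℝ) else 0) (fun i' j' => G i' j' Set.univ) := by
        rw [hSval, ← hfrob]
    _ ≤ genNorm hEuc (fun i' j' => G i' j' Set.univ) := ge_genNorm hMid
    _ ≤ tvH hEuc G := le_csSup hGbdd hmemG
end
end
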